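/- arXiv:1705.00765 — 3 statements merged into one kernel-verified Lean document; each statement's English description precedes it below -/
import Mathlib

section
/- Let n ≥ 1, let v : (0,∞) × ℝⁿ → ℝ be smooth and satisfy ∂v/∂t = Δv − |∇v|² − n/(2t), and let α, β, b, c, λ be real constants with α ≠ 0. Define P = αΔv − β|∇v|² − b·v/t − c·n/t. Then P satisfies the evolution equation ∂P/∂t = ΔP − 2⟨∇P, ∇v⟩ − 2(α−β)|∇²v − (λ/(2t))I|² − (2(α−β)/α)(λ/t)P − (b + 2(α−β)βλ/α)|∇v|²/t + (1 − 2(α−β)λ/α)·b·v/t² + (1 − 2(α−β)λ/α)·c·n/t² + (α−β)nλ²/(2t²) + b·n/(2t²). -/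
open MeasureTheory Real

noncomputable section

/-- Partial derivative of `g` at `x` in the `i`-th coordinate direction. -/
def pd {n : ℕ} (i : Fin n) (g : (Fin n → ℝ) → ℝ) (x : Fin n → ℝ) : ℝ :=
  fderiv ℝ g x (Pi.single i 1)

/-- Squared Euclidean norm of the (spatial) gradient of `g` at `x`. -/
def gradSq {n : ℕ} (g : (Fin n → ℝ) → ℝ) (x : Fin n → ℝ) : ℝ :=
  ∑ i, (pd i g x) ^ 2

/-- The (spatial) Laplacian of `g` at `x`. -/
def lap {n : ℕ} (g : (Fin n → ℝ) → ℝ) (x : Fin n → ℝ) : ℝ :=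
  ∑ i, pd i (pd i g) x

/-- The `(i,j)` entry of the Hessian of `g` at `x`. -/
def hess {n : ℕ} (i j : Fin n) (g : (Fin n → ℝ) → ℝ) (x : Fin n → ℝ) : ℝ :=
  pd i (pd j g) x

section DdBasic

variable {E : Type*} [NormedAddCommGroup E] [NormedSpace ℝ E]

/-- Directional derivative. -/
def Dd (w : E) (g : E → ℝ) (p : E) : ℝ := fderiv ℝ g p w

lemma Dd_congr_nhds {f g : E → ℝ} {p : E} {w : E} (h : f =ᶠ[nhds p] g) :
    Dd w f p = Dd w g p := by
  unfold Dd; rw [h.fderiv_eq]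

lemma Dd_congr_on {U : Set E} (hU : IsOpen U) {f g : E → ℝ} (h : ∀ q ∈ U, f q = g q)
    {p : E} (hp : p ∈ U) (w : E) : Dd w f p = Dd w g p := by
  apply Dd_congr_nhds
  filter_upwards [hU.mem_nhds hp] with q hq using h q hq

lemma contDiffOn_Dd {U : Set E} (hU : IsOpen U) {g : E → ℝ}
    (hg : ContDiffOn ℝ (⊤ : ℕ∞) g U) (w : E) : ContDiffOn ℝ (⊤ : ℕ∞) (Dd w g) U := by
  have h1 : ContDiffOn ℝ (⊤ : ℕ∞) (fderiv ℝ g) U :=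
    hg.fderiv_of_isOpen hU (by exact_mod_cast le_top)
  exact h1.clm_apply contDiffOn_const

lemma differentiableAt_of_smooth {U : Set E} (hU : IsOpen U) {g : E → ℝ}
    (hg : ContDiffOn ℝ (⊤ : ℕ∞) g U) {p : E} (hp : p ∈ U) : DifferentiableAt ℝ g p :=
  ((hg.contDiffAt (hU.mem_nhds hp)).differentiableAt (by simp))

lemma Dd_Dd {g : E → ℝ} {p : E} (h : DifferentiableAt ℝ (fderiv ℝ g) p) (w w' : E) :
    Dd w (Dd w' g) p = fderiv ℝ (fderiv ℝ g) p w w' := by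
  have h2 : Dd w' g = fun q => (fderiv ℝ g q) w' := rfl
  rw [Dd, h2, fderiv_clm_apply h (differentiableAt_const _)]
  simp

lemma Dd_comm {U : Set E} (hU : IsOpen U) {g : E → ℝ} (hg : ContDiffOn ℝ (⊤ : ℕ∞) g U)
    {p : E} (hp : p ∈ U) (w w' : E) : Dd w (Dd w' g) p = Dd w' (Dd w g) p := by
  have hat : ContDiffAt ℝ (⊤ : ℕ∞) g p := hg.contDiffAt (hU.mem_nhds hp)
  have hd : DifferentiableAt ℝ (fderiv ℝ g) p :=
    (hat.fderiv_right (m := (⊤ : ℕ∞)) (by simp)).differentiableAt (by simp)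
  have hsymm : IsSymmSndFDerivAt ℝ g p := hat.isSymmSndFDerivAt (by rw [minSmoothness_of_isRCLikeNormedField]; exact WithTop.coe_le_coe.mpr le_top)
  rw [Dd_Dd hd, Dd_Dd hd, hsymm.eq]

end DdBasic

section DdArith

variable {E : Type*} [NormedAddCommGroup E] [NormedSpace ℝ E]
variable {f g : E → ℝ} {p w : E}

lemma Dd_const (c : ℝ) : Dd w (fun _ => c) p = 0 := by simp [Dd]

lemma Dd_add (hf : DifferentiableAt ℝ f p) (hg : DifferentiableAt ℝ g p) :
    Dd w (fun q => f q + g q) p = Dd w f p + Dd w g p := by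
  unfold Dd; rw [fderiv_fun_add hf hg]; simp

lemma Dd_sub (hf : DifferentiableAt ℝ f p) (hg : DifferentiableAt ℝ g p) :
    Dd w (fun q => f q - g q) p = Dd w f p - Dd w g p := by
  unfold Dd; rw [fderiv_fun_sub hf hg]; simp

lemma Dd_mul (hf : DifferentiableAt ℝ f p) (hg : DifferentiableAt ℝ g p) :
    Dd w (fun q => f q * g q) p = Dd w f p * g p + f p * Dd w g p := by
  unfold Dd; rw [fderiv_fun_mul hf hg]; simp; ring

lemma Dd_const_mul (c : ℝ) (hf : DifferentiableAt ℝ f p) :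
    Dd w (fun q => c * f q) p = c * Dd w f p := by
  unfold Dd; rw [fderiv_const_mul hf]; simp

lemma Dd_sq (hf : DifferentiableAt ℝ f p) :
    Dd w (fun q => f q ^ 2) p = 2 * f p * Dd w f p := by
  have h : (fun q => f q ^ 2) = fun q => f q * f q := by funext q; ring
  rw [h, Dd_mul hf hf]; ring

lemma Dd_sum {ι : Type*} (s : Finset ι) (A : ι → E → ℝ)
    (h : ∀ i ∈ s, DifferentiableAt ℝ (A i) p) :
    Dd w (fun q => ∑ i ∈ s, A i q) p = ∑ i ∈ s, Dd w (A i) p := by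
  unfold Dd; rw [fderiv_fun_sum h]; simp

end DdArith

section DdProd

variable {n : ℕ} {t : ℝ} {x : Fin n → ℝ} {w : ℝ × (Fin n → ℝ)}

lemma Dd_fst {p : ℝ × (Fin n → ℝ)} : Dd w (fun q => q.1) p = w.1 := by
  have h : HasFDerivAt (fun q : ℝ × (Fin n → ℝ) => q.1)
      (ContinuousLinearMap.fst ℝ ℝ (Fin n → ℝ)) p := hasFDerivAt_fst
  rw [Dd, h.fderiv]; rfl

lemma Dd_inv_fst {p : ℝ × (Fin n → ℝ)} (hp : p.1 ≠ 0) :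
    Dd w (fun q => (q.1)⁻¹) p = -(w.1 / p.1 ^ 2) := by
  have h1 : HasDerivAt (fun y : ℝ => y⁻¹) (-(p.1 ^ 2)⁻¹) p.1 := hasDerivAt_inv hp
  have h2 : HasFDerivAt (fun q : ℝ × (Fin n → ℝ) => q.1)
      (ContinuousLinearMap.fst ℝ ℝ (Fin n → ℝ)) p := hasFDerivAt_fst
  have h3 := (h1.hasFDerivAt).comp p h2
  have h4 : HasFDerivAt (fun q : ℝ × (Fin n → ℝ) => (q.1)⁻¹)
      ((ContinuousLinearMap.smulRight (1 : ℝ →L[ℝ] ℝ) (-(p.1 ^ 2)⁻¹)).comp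
        (ContinuousLinearMap.fst ℝ ℝ (Fin n → ℝ))) p := h3
  rw [Dd, h4.fderiv]
  simp [ContinuousLinearMap.smulRight_apply]
  field_simp

lemma contDiffOn_inv_fst :
    ContDiffOn ℝ (⊤ : ℕ∞) (fun q : ℝ × (Fin n → ℝ) => (q.1)⁻¹)
      (Set.Ioi 0 ×ˢ Set.univ) := by
  apply ContDiffOn.inv (contDiff_fst.contDiffOn)
  rintro ⟨s, y⟩ hq
  exact ne_of_gt hq.1

end DdProd

section Bridges

/-- Spatial direction vectors in space-time. -/
def eS (n : ℕ) (i : Fin n) : ℝ × (Fin n → ℝ) := ((0 : ℝ), Pi.single i 1)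

/-- Time direction vector in space-time. -/
def eT (n : ℕ) : ℝ × (Fin n → ℝ) := ((1 : ℝ), 0)

/-- The space-time domain. -/
def Uset (n : ℕ) : Set (ℝ × (Fin n → ℝ)) := Set.Ioi 0 ×ˢ Set.univ

lemma isOpen_Uset {n : ℕ} : IsOpen (Uset n) := isOpen_Ioi.prod isOpen_univ

lemma mem_Uset {n : ℕ} {t : ℝ} {x : Fin n → ℝ} (ht : 0 < t) : (t, x) ∈ Uset n :=
  ⟨ht, trivial⟩

variable {n : ℕ} {g : ℝ × (Fin n → ℝ) → ℝ} {t : ℝ} {x : Fin n → ℝ}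

lemma pd_bridge (hg : DifferentiableAt ℝ g (t, x)) (i : Fin n) :
    pd i (fun y => g (t, y)) x = Dd (eS n i) g (t, x) := by
  have hm : HasFDerivAt (fun y : Fin n → ℝ => ((t, y) : ℝ × (Fin n → ℝ)))
      ((0 : (Fin n → ℝ) →L[ℝ] ℝ).prod (ContinuousLinearMap.id ℝ (Fin n → ℝ))) x :=
    HasFDerivAt.prodMk (hasFDerivAt_const t x) (hasFDerivAt_id x)
  have h := (hg.hasFDerivAt.comp x hm)
  have h' : HasFDerivAt (fun y : Fin n → ℝ => g (t, y))
      ((fderiv ℝ g (t, x)).comp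
        ((0 : (Fin n → ℝ) →L[ℝ] ℝ).prod (ContinuousLinearMap.id ℝ (Fin n → ℝ)))) x := h
  rw [pd, h'.fderiv]
  simp [Dd, eS]

lemma dt_bridge (hg : DifferentiableAt ℝ g (t, x)) :
    deriv (fun s => g (s, x)) t = Dd (eT n) g (t, x) := by
  have hm : HasFDerivAt (fun s : ℝ => ((s, x) : ℝ × (Fin n → ℝ)))
      ((ContinuousLinearMap.id ℝ ℝ).prod (0 : ℝ →L[ℝ] (Fin n → ℝ))) t :=
    HasFDerivAt.prodMk (hasFDerivAt_id t) (hasFDerivAt_const x t)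
  have h := (hg.hasFDerivAt.comp t hm)
  have h' : HasFDerivAt (fun s : ℝ => g (s, x))
      ((fderiv ℝ g (t, x)).comp
        ((ContinuousLinearMap.id ℝ ℝ).prod (0 : ℝ →L[ℝ] (Fin n → ℝ)))) t := h
  rw [h'.hasDerivAt.deriv]
  simp [Dd, eT]

variable (hg : ContDiffOn ℝ (⊤ : ℕ∞) g (Uset n)) (ht : 0 < t)
include hg ht

lemma pd2_bridge (i j : Fin n) :
    pd i (pd j (fun y => g (t, y))) x = Dd (eS n i) (Dd (eS n j) g) (t, x) := by
  have h1 : pd j (fun y => g (t, y)) = fun y => Dd (eS n j) g (t, y) := by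
    funext y
    exact pd_bridge (differentiableAt_of_smooth isOpen_Uset hg (mem_Uset ht)) j
  rw [h1]
  exact pd_bridge (differentiableAt_of_smooth isOpen_Uset
    (contDiffOn_Dd isOpen_Uset hg _) (mem_Uset ht)) i

lemma lap_bridge : lap (fun y => g (t, y)) x = ∑ i, Dd (eS n i) (Dd (eS n i) g) (t, x) := by
  unfold lap
  exact Finset.sum_congr rfl fun i _ => pd2_bridge hg ht i i

lemma gradSq_bridge : gradSq (fun y => g (t, y)) x = ∑ i, (Dd (eS n i) g (t, x)) ^ 2 := by
  unfold gradSq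
  refine Finset.sum_congr rfl fun i _ => ?_
  rw [pd_bridge (differentiableAt_of_smooth isOpen_Uset hg (mem_Uset ht)) i]

end Bridges

section Main

variable {n : ℕ} (v : ℝ → (Fin n → ℝ) → ℝ)

/-- Space-time version of `v`. -/
def Ff : ℝ × (Fin n → ℝ) → ℝ := fun p => v p.1 p.2

/-- Space-time Laplacian function. -/
def Lf : ℝ × (Fin n → ℝ) → ℝ := fun q => ∑ i, Dd (eS n i) (Dd (eS n i) (Ff v)) q

/-- Space-time gradient-square function. -/
def Gf : ℝ × (Fin n → ℝ) → ℝ := fun q => ∑ i, Dd (eS n i) (Ff v) q ^ 2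

/-- Space-time P function. -/
def Qf (α β b c : ℝ) : ℝ × (Fin n → ℝ) → ℝ :=
  fun q => α * Lf v q - β * Gf v q - b * Ff v q * (q.1)⁻¹ - c * n * (q.1)⁻¹

variable {v}

lemma dA {g : ℝ × (Fin n → ℝ) → ℝ} (hg : ContDiffOn ℝ (⊤ : ℕ∞) g (Uset n))
    {q : ℝ × (Fin n → ℝ)} (hq : q ∈ Uset n) : DifferentiableAt ℝ g q :=
  differentiableAt_of_smooth isOpen_Uset hg hq

lemma collect_two {m : ℕ} (f : Fin m → ℝ) : ∑ i, 2 * f i = 2 * ∑ i, f i := by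
  rw [Finset.mul_sum]

lemma collect2 {m : ℕ} (c1 c2 : ℝ) (f g : Fin m → ℝ) :
    ∑ i, (c1 * f i + c2 * g i) = c1 * (∑ i, f i) + c2 * (∑ i, g i) := by
  simp [Finset.sum_add_distrib, Finset.mul_sum]

lemma collect3 {m : ℕ} (c1 c2 c3 : ℝ) (f g h : Fin m → ℝ) :
    ∑ i, (c1 * f i + c2 * g i + c3 * h i)
      = c1 * (∑ i, f i) + c2 * (∑ i, g i) + c3 * (∑ i, h i) := by
  simp [Finset.sum_add_distrib, Finset.mul_sum]

variable (hv : ContDiffOn ℝ (⊤ : ℕ∞) (Ff v) (Uset n))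
include hv

lemma smooth_Lf : ContDiffOn ℝ (⊤ : ℕ∞) (Lf v) (Uset n) :=
  ContDiffOn.sum fun i _ => contDiffOn_Dd isOpen_Uset (contDiffOn_Dd isOpen_Uset hv _) _

lemma smooth_Gf : ContDiffOn ℝ (⊤ : ℕ∞) (Gf v) (Uset n) :=
  ContDiffOn.sum fun i _ => (contDiffOn_Dd isOpen_Uset hv _).pow 2

lemma smooth_Qf (α β b c : ℝ) : ContDiffOn ℝ (⊤ : ℕ∞) (Qf v α β b c) (Uset n) :=
  (((contDiffOn_const.mul (smooth_Lf hv)).sub (contDiffOn_const.mul (smooth_Gf hv))).sub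
    ((contDiffOn_const.mul hv).mul contDiffOn_inv_fst)).sub
    (contDiffOn_const.mul contDiffOn_inv_fst)

lemma dL_on (w : ℝ × (Fin n → ℝ)) {q : ℝ × (Fin n → ℝ)} (hq : q ∈ Uset n) :
    Dd w (Lf v) q = ∑ i, Dd w (Dd (eS n i) (Dd (eS n i) (Ff v))) q := by
  have h : Lf v = fun q => ∑ i, Dd (eS n i) (Dd (eS n i) (Ff v)) q := rfl
  rw [h, Dd_sum Finset.univ _ (fun i _ =>
    dA (contDiffOn_Dd isOpen_Uset (contDiffOn_Dd isOpen_Uset hv _) _) hq)]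

lemma dG_on (w : ℝ × (Fin n → ℝ)) {q : ℝ × (Fin n → ℝ)} (hq : q ∈ Uset n) :
    Dd w (Gf v) q = ∑ i, 2 * (Dd (eS n i) (Ff v) q * Dd w (Dd (eS n i) (Ff v)) q) := by
  have h : Gf v = fun q => ∑ i, Dd (eS n i) (Ff v) q ^ 2 := rfl
  rw [h, Dd_sum Finset.univ _ (fun i _ =>
    (dA (contDiffOn_Dd isOpen_Uset hv _) hq).fun_pow 2)]
  refine Finset.sum_congr rfl fun i _ => ?_
  rw [Dd_sq (dA (contDiffOn_Dd isOpen_Uset hv _) hq)]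
  ring

lemma dQ_on (α β b c : ℝ) (w : ℝ × (Fin n → ℝ)) {q : ℝ × (Fin n → ℝ)} (hq : q ∈ Uset n) :
    Dd w (Qf v α β b c) q =
      α * Dd w (Lf v) q - β * Dd w (Gf v) q
        - b * Dd w (Ff v) q * (q.1)⁻¹ + b * Ff v q * (w.1 / q.1 ^ 2)
        + c * n * (w.1 / q.1 ^ 2) := by
  have hq1 : q.1 ≠ 0 := ne_of_gt hq.1
  have dL' := dA (smooth_Lf hv) hq
  have dG' := dA (smooth_Gf hv) hq
  have dF' := dA hv hq
  have dτ : DifferentiableAt ℝ (fun q : ℝ × (Fin n → ℝ) => (q.1)⁻¹) q :=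
    dA contDiffOn_inv_fst hq
  have h : Qf v α β b c = fun q =>
      α * Lf v q - β * Gf v q - b * Ff v q * (q.1)⁻¹ - c * ↑n * (q.1)⁻¹ := rfl
  rw [h, Dd_sub (((dL'.const_mul α).fun_sub (dG'.const_mul β)).fun_sub ((dF'.const_mul b).fun_mul dτ))
      (dτ.const_mul (c * ↑n)),
    Dd_sub ((dL'.const_mul α).fun_sub (dG'.const_mul β)) ((dF'.const_mul b).fun_mul dτ),
    Dd_sub (dL'.const_mul α) (dG'.const_mul β),
    Dd_const_mul α dL', Dd_const_mul β dG',
    Dd_mul (dF'.const_mul b) dτ, Dd_const_mul b dF',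
    Dd_const_mul (c * ↑n) dτ, Dd_inv_fst hq1]
  ring

lemma commTS (i : Fin n) {q : ℝ × (Fin n → ℝ)} (hq : q ∈ Uset n) :
    Dd (eT n) (Dd (eS n i) (Ff v)) q = Dd (eS n i) (Dd (eT n) (Ff v)) q :=
  Dd_comm isOpen_Uset hv hq _ _

lemma comm3a (w1 w2 w3 : ℝ × (Fin n → ℝ)) {q : ℝ × (Fin n → ℝ)} (hq : q ∈ Uset n) :
    Dd w1 (Dd w2 (Dd w3 (Ff v))) q = Dd w2 (Dd w1 (Dd w3 (Ff v))) q :=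
  Dd_comm isOpen_Uset (contDiffOn_Dd isOpen_Uset hv _) hq _ _

lemma comm3b (w1 w2 w3 : ℝ × (Fin n → ℝ)) {q : ℝ × (Fin n → ℝ)} (hq : q ∈ Uset n) :
    Dd w1 (Dd w2 (Dd w3 (Ff v))) q = Dd w1 (Dd w3 (Dd w2 (Ff v))) q :=
  Dd_congr_on isOpen_Uset (fun r hr => Dd_comm isOpen_Uset hv hr _ _) hq _

lemma comm3_full (w1 w2 : ℝ × (Fin n → ℝ)) {q : ℝ × (Fin n → ℝ)} (hq : q ∈ Uset n) :
    Dd w1 (Dd w2 (Dd w2 (Ff v))) q = Dd w2 (Dd w2 (Dd w1 (Ff v))) q := by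
  rw [comm3a hv w1 w2 w2 hq, comm3b hv w2 w1 w2 hq]

lemma hE_on
    (heq : ∀ t > (0:ℝ), ∀ x : Fin n → ℝ,
      deriv (fun s => v s x) t = lap (v t) x - gradSq (v t) x - n / (2 * t)) :
    ∀ q ∈ Uset n, Dd (eT n) (Ff v) q = Lf v q - Gf v q - n / (2 * q.1) := by
  rintro ⟨s, y⟩ ⟨hs, -⟩
  have hq : ((s, y) : ℝ × (Fin n → ℝ)) ∈ Uset n := ⟨hs, trivial⟩
  have h2 : deriv (fun s' => v s' y) s = Dd (eT n) (Ff v) (s, y) :=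
    dt_bridge (g := Ff v) (dA hv hq)
  have h3 : lap (v s) y = Lf v (s, y) := lap_bridge (g := Ff v) hv hs
  have h4 : gradSq (v s) y = Gf v (s, y) := gradSq_bridge (g := Ff v) hv hs
  rw [← h2, heq s hs y, h3, h4]

lemma dW_on
    (heq : ∀ t > (0:ℝ), ∀ x : Fin n → ℝ,
      deriv (fun s => v s x) t = lap (v t) x - gradSq (v t) x - n / (2 * t))
    (i : Fin n) {q : ℝ × (Fin n → ℝ)} (hq : q ∈ Uset n) :
    Dd (eS n i) (Dd (eT n) (Ff v)) q = Dd (eS n i) (Lf v) q - Dd (eS n i) (Gf v) q := by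
  have hfun : ∀ r ∈ Uset n, Dd (eT n) (Ff v) r
      = Lf v r - Gf v r - (n / 2) * (r.1)⁻¹ := by
    intro r hr
    rw [hE_on hv heq r hr]
    ring
  have dL' := dA (smooth_Lf hv) hq
  have dG' := dA (smooth_Gf hv) hq
  have dτ := dA (contDiffOn_inv_fst (n := n)) hq
  rw [Dd_congr_on isOpen_Uset hfun hq (eS n i),
    Dd_sub (dL'.fun_sub dG') (dτ.const_mul _), Dd_sub dL' dG', Dd_const_mul _ dτ,
    Dd_inv_fst (ne_of_gt hq.1)]
  have he : (eS n i).1 = (0 : ℝ) := rfl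
  rw [he]
  simp

lemma dW2_on
    (heq : ∀ t > (0:ℝ), ∀ x : Fin n → ℝ,
      deriv (fun s => v s x) t = lap (v t) x - gradSq (v t) x - n / (2 * t))
    (i : Fin n) {q : ℝ × (Fin n → ℝ)} (hq : q ∈ Uset n) :
    Dd (eS n i) (Dd (eS n i) (Dd (eT n) (Ff v))) q
      = Dd (eS n i) (Dd (eS n i) (Lf v)) q - Dd (eS n i) (Dd (eS n i) (Gf v)) q := by
  have hfun : ∀ r ∈ Uset n, Dd (eS n i) (Dd (eT n) (Ff v)) r
      = Dd (eS n i) (Lf v) r - Dd (eS n i) (Gf v) r := fun r hr => dW_on hv heq i hr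
  rw [Dd_congr_on isOpen_Uset hfun hq (eS n i),
    Dd_sub (dA (contDiffOn_Dd isOpen_Uset (smooth_Lf hv) _) hq)
      (dA (contDiffOn_Dd isOpen_Uset (smooth_Gf hv) _) hq)]

lemma dL2_on (i : Fin n) {q : ℝ × (Fin n → ℝ)} (hq : q ∈ Uset n) :
    Dd (eS n i) (Dd (eS n i) (Lf v)) q
      = ∑ j, Dd (eS n i) (Dd (eS n i) (Dd (eS n j) (Dd (eS n j) (Ff v)))) q := by
  have hfun : ∀ r ∈ Uset n, Dd (eS n i) (Lf v) r
      = ∑ j, Dd (eS n i) (Dd (eS n j) (Dd (eS n j) (Ff v))) r := fun r hr => dL_on hv _ hr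
  rw [Dd_congr_on isOpen_Uset hfun hq (eS n i),
    Dd_sum Finset.univ _ (fun j _ => dA (contDiffOn_Dd isOpen_Uset
      (contDiffOn_Dd isOpen_Uset (contDiffOn_Dd isOpen_Uset hv _) _) _) hq)]

lemma dG2_on (i : Fin n) {q : ℝ × (Fin n → ℝ)} (hq : q ∈ Uset n) :
    Dd (eS n i) (Dd (eS n i) (Gf v)) q
      = ∑ j, (2 * Dd (eS n i) (Dd (eS n j) (Ff v)) q ^ 2
          + 2 * (Dd (eS n j) (Ff v) q * Dd (eS n i) (Dd (eS n i) (Dd (eS n j) (Ff v))) q)) := by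
  have hfun : ∀ r ∈ Uset n, Dd (eS n i) (Gf v) r
      = ∑ j, 2 * (Dd (eS n j) (Ff v) r * Dd (eS n i) (Dd (eS n j) (Ff v)) r) :=
    fun r hr => dG_on hv _ hr
  rw [Dd_congr_on isOpen_Uset hfun hq (eS n i),
    Dd_sum Finset.univ _ (fun j _ => (((dA (contDiffOn_Dd isOpen_Uset hv _) hq).fun_mul
      (dA (contDiffOn_Dd isOpen_Uset (contDiffOn_Dd isOpen_Uset hv _) _) hq)).const_mul 2))]
  refine Finset.sum_congr rfl fun j _ => ?_
  rw [Dd_const_mul 2 ((dA (contDiffOn_Dd isOpen_Uset hv _) hq).fun_mul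
      (dA (contDiffOn_Dd isOpen_Uset (contDiffOn_Dd isOpen_Uset hv _) _) hq)),
    Dd_mul (dA (contDiffOn_Dd isOpen_Uset hv _) hq)
      (dA (contDiffOn_Dd isOpen_Uset (contDiffOn_Dd isOpen_Uset hv _) _) hq)]
  ring

lemma I1 {q : ℝ × (Fin n → ℝ)} (hq : q ∈ Uset n) :
    ∑ i, ∑ j, Dd (eS n j) (Ff v) q * Dd (eS n i) (Dd (eS n i) (Dd (eS n j) (Ff v))) q
  = ∑ i, ∑ j, Dd (eS n i) (Ff v) q * Dd (eS n i) (Dd (eS n j) (Dd (eS n j) (Ff v))) q := by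
  rw [Finset.sum_comm]
  exact Finset.sum_congr rfl fun i _ => Finset.sum_congr rfl fun j _ => by
    rw [comm3_full hv (eS n i) (eS n j) hq]

end Main

/-- Lemma 3.1: general evolution equation for `P = αΔv − β|∇v|² − b·v/t − c·n/t` when
`∂v/∂t = Δv − |∇v|² − n/(2t)` on flat space. -/
theorem evolution_P_general
    (n : ℕ) (hn : 1 ≤ n) (v : ℝ → (Fin n → ℝ) → ℝ)
    (hsmooth : ContDiffOn ℝ (⊤ : ℕ∞) (fun p : ℝ × (Fin n → ℝ) => v p.1 p.2)
      (Set.Ioi 0 ×ˢ Set.univ))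
    (heq : ∀ t > (0:ℝ), ∀ x : Fin n → ℝ,
      deriv (fun s => v s x) t = lap (v t) x - gradSq (v t) x - n / (2 * t))
    (α β b c l : ℝ) (hα : α ≠ 0)
    (P : ℝ → (Fin n → ℝ) → ℝ)
    (hP : ∀ t x, P t x = α * lap (v t) x - β * gradSq (v t) x - b * v t x / t - c * n / t) :
    ∀ t > (0:ℝ), ∀ x : Fin n → ℝ,
      deriv (fun s => P s x) t =
        lap (P t) x - 2 * (∑ i, pd i (P t) x * pd i (v t) x)
        - 2 * (α - β) *
            (∑ i, ∑ j, (hess i j (v t) x - (l / (2 * t)) * (if i = j then (1:ℝ) else 0)) ^ 2)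
        - (2 * (α - β) / α) * (l / t) * P t x
        - (b + 2 * (α - β) * β * l / α) * (gradSq (v t) x / t)
        + (1 - 2 * (α - β) * l / α) * (b * v t x / t ^ 2)
        + (1 - 2 * (α - β) * l / α) * (c * n / t ^ 2)
        + (α - β) * n * l ^ 2 / (2 * t ^ 2)
        + b * n / (2 * t ^ 2) := by
  intro t ht x
  have hq : ((t, x) : ℝ × (Fin n → ℝ)) ∈ Uset n := ⟨ht, trivial⟩
  have hv : ContDiffOn ℝ (⊤ : ℕ∞) (Ff v) (Uset n) := hsmooth
  have ht0 : t ≠ 0 := ne_of_gt ht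
  -- bridges
  have hvtx : v t x = Ff v (t, x) := rfl
  have hgrad : gradSq (v t) x = Gf v (t, x) := gradSq_bridge (g := Ff v) hv ht
  have hpdv : ∀ i, pd i (v t) x = Dd (eS n i) (Ff v) (t, x) :=
    fun i => pd_bridge (g := Ff v) (dA hv hq) i
  have hhess : ∀ i j : Fin n, hess i j (v t) x = Dd (eS n i) (Dd (eS n j) (Ff v)) (t, x) :=
    fun i j => pd2_bridge (g := Ff v) hv ht i j
  -- P vs Qf
  have hPfun : ∀ s, 0 < s → ∀ y, P s y = Qf v α β b c (s, y) := by
    intro s hs y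
    have h3 : lap (v s) y = Lf v (s, y) := lap_bridge (g := Ff v) hv hs
    have h4 : gradSq (v s) y = Gf v (s, y) := gradSq_bridge (g := Ff v) hv hs
    rw [hP s y, h3, h4]
    show _ = α * Lf v (s, y) - β * Gf v (s, y) - b * Ff v (s, y) * s⁻¹ - c * ↑n * s⁻¹
    have hvy : v s y = Ff v (s, y) := rfl
    rw [hvy]
    ring
  have hQsm := smooth_Qf hv α β b c
  have hPt : P t = fun y => Qf v α β b c (t, y) := funext fun y => hPfun t ht y
  have hlapP0 : lap (P t) x = ∑ i, Dd (eS n i) (Dd (eS n i) (Qf v α β b c)) (t, x) := by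
    rw [hPt]; exact lap_bridge (g := Qf v α β b c) hQsm ht
  have hpdP : ∀ i, pd i (P t) x = Dd (eS n i) (Qf v α β b c) (t, x) := by
    intro i; rw [hPt]; exact pd_bridge (g := Qf v α β b c) (dA hQsm hq) i
  have hDeriv : deriv (fun s => P s x) t = Dd (eT n) (Qf v α β b c) (t, x) := by
    have hev : (fun s => P s x) =ᶠ[nhds t] fun s => Qf v α β b c (s, x) := by
      filter_upwards [isOpen_Ioi.mem_nhds ht] with s hs
      exact hPfun s hs x
    rw [hev.deriv_eq]
    exact dt_bridge (g := Qf v α β b c) (dA hQsm hq)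
  -- first spatial derivative of Q
  have hDQi : ∀ i : Fin n, Dd (eS n i) (Qf v α β b c) (t, x)
      = α * (∑ j, Dd (eS n i) (Dd (eS n j) (Dd (eS n j) (Ff v))) (t, x))
        - β * (∑ j, 2 * (Dd (eS n j) (Ff v) (t, x) * Dd (eS n i) (Dd (eS n j) (Ff v)) (t, x)))
        - b * Dd (eS n i) (Ff v) (t, x) * t⁻¹ := by
    intro i
    rw [dQ_on hv α β b c (eS n i) hq, dL_on hv (eS n i) hq, dG_on hv (eS n i) hq,
      show ((eS n i).1) = (0:ℝ) from rfl]
    simp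
  -- second spatial derivative of Q
  have hDQ2i : ∀ i : Fin n, Dd (eS n i) (Dd (eS n i) (Qf v α β b c)) (t, x)
      = α * (∑ j, Dd (eS n i) (Dd (eS n i) (Dd (eS n j) (Dd (eS n j) (Ff v)))) (t, x))
        - β * (∑ j, (2 * Dd (eS n i) (Dd (eS n j) (Ff v)) (t, x) ^ 2 + 2 * (Dd (eS n j) (Ff v) (t, x) * Dd (eS n i) (Dd (eS n i) (Dd (eS n j) (Ff v))) (t, x))))
        - b * Dd (eS n i) (Dd (eS n i) (Ff v)) (t, x) * t⁻¹ := by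
    intro i
    have hfun : ∀ r ∈ Uset n, Dd (eS n i) (Qf v α β b c) r
        = α * Dd (eS n i) (Lf v) r - β * Dd (eS n i) (Gf v) r
          - b * Dd (eS n i) (Ff v) r * (r.1)⁻¹ := by
      intro r hr
      rw [dQ_on hv α β b c (eS n i) hr, show ((eS n i).1) = (0:ℝ) from rfl]
      simp
    have d1 := dA (contDiffOn_Dd isOpen_Uset (smooth_Lf hv) (eS n i)) hq
    have d2 := dA (contDiffOn_Dd isOpen_Uset (smooth_Gf hv) (eS n i)) hq
    have d3 := dA (contDiffOn_Dd isOpen_Uset hv (eS n i)) hq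
    have dτ := dA (contDiffOn_inv_fst (n := n)) hq
    rw [Dd_congr_on isOpen_Uset hfun hq (eS n i),
      Dd_sub ((d1.const_mul α).fun_sub (d2.const_mul β)) ((d3.const_mul b).fun_mul dτ),
      Dd_sub (d1.const_mul α) (d2.const_mul β), Dd_const_mul α d1, Dd_const_mul β d2,
      Dd_mul (d3.const_mul b) dτ, Dd_const_mul b d3, Dd_inv_fst (ne_of_gt hq.1),
      dL2_on hv i hq, dG2_on hv i hq, show ((eS n i).1) = (0:ℝ) from rfl]
    simp
  -- time derivative of Q (top level split)
  have hDtQ : Dd (eT n) (Qf v α β b c) (t, x)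
      = α * Dd (eT n) (Lf v) (t, x) - β * Dd (eT n) (Gf v) (t, x)
        - b * Dd (eT n) (Ff v) (t, x) * t⁻¹ + b * Ff v (t, x) * (1 / t ^ 2)
        + c * ↑n * (1 / t ^ 2) := by
    rw [dQ_on hv α β b c (eT n) hq, show ((eT n).1) = (1:ℝ) from rfl]
  have hFt : Dd (eT n) (Ff v) (t, x) = Lf v (t, x) - Gf v (t, x) - ↑n / (2 * t) :=
    hE_on hv heq (t, x) hq
  -- time derivative of Lf
  have hDtL : Dd (eT n) (Lf v) (t, x)
      = ∑ i, (Dd (eS n i) (Dd (eS n i) (Lf v)) (t, x)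
          - Dd (eS n i) (Dd (eS n i) (Gf v)) (t, x)) := by
    rw [dL_on hv (eT n) hq]
    refine Finset.sum_congr rfl fun i _ => ?_
    rw [comm3_full hv (eT n) (eS n i) hq]
    exact dW2_on hv heq i hq
  have hrowG2 : ∀ i : Fin n, Dd (eS n i) (Dd (eS n i) (Gf v)) (t, x)
      = 2 * (∑ j, Dd (eS n i) (Dd (eS n j) (Ff v)) (t, x) ^ 2) + 2 * (∑ j, Dd (eS n j) (Ff v) (t, x) * Dd (eS n i) (Dd (eS n i) (Dd (eS n j) (Ff v))) (t, x)) := by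
    intro i
    rw [dG2_on hv i hq, collect2 2 2 _ _]
  have hDtLA : Dd (eT n) (Lf v) (t, x)
      = (∑ i, ∑ j, Dd (eS n i) (Dd (eS n i) (Dd (eS n j) (Dd (eS n j) (Ff v)))) (t, x)) - (2 * (∑ i, ∑ j, Dd (eS n i) (Dd (eS n j) (Ff v)) (t, x) ^ 2) + 2 * (∑ i, ∑ j, Dd (eS n i) (Ff v) (t, x) * Dd (eS n i) (Dd (eS n j) (Dd (eS n j) (Ff v))) (t, x))) := by
    rw [hDtL, Finset.sum_sub_distrib,
      Finset.sum_congr rfl fun (i : Fin n) _ => dL2_on hv i hq,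
      Finset.sum_congr rfl fun (i : Fin n) _ => hrowG2 i,
      collect2 2 2 _ _, I1 hv hq]
  -- time derivative of Gf
  have hrowDtG : ∀ i : Fin n, 2 * (Dd (eS n i) (Ff v) (t, x) * Dd (eT n) (Dd (eS n i) (Ff v)) (t, x))
      = 2 * (∑ j, Dd (eS n i) (Ff v) (t, x) * Dd (eS n i) (Dd (eS n j) (Dd (eS n j) (Ff v))) (t, x)) + (-4) * (∑ j, Dd (eS n i) (Ff v) (t, x) * (Dd (eS n j) (Ff v) (t, x) * Dd (eS n i) (Dd (eS n j) (Ff v)) (t, x))) := by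
    intro i
    rw [commTS hv i hq, dW_on hv heq i hq, dL_on hv (eS n i) hq, dG_on hv (eS n i) hq,
      collect_two _, ← Finset.mul_sum, ← Finset.mul_sum]
    ring
  have hDtGA : Dd (eT n) (Gf v) (t, x) = 2 * (∑ i, ∑ j, Dd (eS n i) (Ff v) (t, x) * Dd (eS n i) (Dd (eS n j) (Dd (eS n j) (Ff v))) (t, x)) + (-4) * (∑ i, ∑ j, Dd (eS n i) (Ff v) (t, x) * (Dd (eS n j) (Ff v) (t, x) * Dd (eS n i) (Dd (eS n j) (Ff v)) (t, x))) := by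
    rw [dG_on hv (eT n) hq, Finset.sum_congr rfl fun (i : Fin n) _ => hrowDtG i,
      collect2 2 (-4) _ _]
  -- Laplacian of P collected
  have hrowQ2 : ∀ i : Fin n, Dd (eS n i) (Dd (eS n i) (Qf v α β b c)) (t, x)
      = α * (∑ j, Dd (eS n i) (Dd (eS n i) (Dd (eS n j) (Dd (eS n j) (Ff v)))) (t, x))
        + (-β) * (2 * (∑ j, Dd (eS n i) (Dd (eS n j) (Ff v)) (t, x) ^ 2) + 2 * (∑ j, Dd (eS n j) (Ff v) (t, x) * Dd (eS n i) (Dd (eS n i) (Dd (eS n j) (Ff v))) (t, x)))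
        + (-(b * t⁻¹)) * Dd (eS n i) (Dd (eS n i) (Ff v)) (t, x) := by
    intro i
    rw [hDQ2i i, collect2 2 2 _ _]
    ring
  have hlapPA : lap (P t) x
      = α * (∑ i, ∑ j, Dd (eS n i) (Dd (eS n i) (Dd (eS n j) (Dd (eS n j) (Ff v)))) (t, x)) + (-β) * (2 * (∑ i, ∑ j, Dd (eS n i) (Dd (eS n j) (Ff v)) (t, x) ^ 2) + 2 * (∑ i, ∑ j, Dd (eS n i) (Ff v) (t, x) * Dd (eS n i) (Dd (eS n j) (Dd (eS n j) (Ff v))) (t, x))) + (-(b * t⁻¹)) * Lf v (t, x) := by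
    rw [hlapP0, Finset.sum_congr rfl fun (i : Fin n) _ => hrowQ2 i,
      collect3 α (-β) (-(b * t⁻¹)) _ _ _, collect2 2 2 _ _, I1 hv hq,
      show (∑ i, Dd (eS n i) (Dd (eS n i) (Ff v)) (t, x)) = Lf v (t, x) from rfl]
  -- gradient pairing collected
  have hrowG : ∀ i : Fin n, pd i (P t) x * pd i (v t) x
      = α * (∑ j, Dd (eS n i) (Ff v) (t, x) * Dd (eS n i) (Dd (eS n j) (Dd (eS n j) (Ff v))) (t, x))
        + (-(2 * β)) * (∑ j, Dd (eS n i) (Ff v) (t, x) * (Dd (eS n j) (Ff v) (t, x) * Dd (eS n i) (Dd (eS n j) (Ff v)) (t, x)))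
        + (-(b * t⁻¹)) * Dd (eS n i) (Ff v) (t, x) ^ 2 := by
    intro i
    rw [hpdP i, hpdv i, hDQi i, collect_two _, ← Finset.mul_sum, ← Finset.mul_sum]
    ring
  have hgradA : (∑ i, pd i (P t) x * pd i (v t) x)
      = α * (∑ i, ∑ j, Dd (eS n i) (Ff v) (t, x) * Dd (eS n i) (Dd (eS n j) (Dd (eS n j) (Ff v))) (t, x)) + (-(2 * β)) * (∑ i, ∑ j, Dd (eS n i) (Ff v) (t, x) * (Dd (eS n j) (Ff v) (t, x) * Dd (eS n i) (Dd (eS n j) (Ff v)) (t, x))) + (-(b * t⁻¹)) * Gf v (t, x) := by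
    rw [Finset.sum_congr rfl fun (i : Fin n) _ => hrowG i,
      collect3 α (-(2 * β)) (-(b * t⁻¹)) _ _ _,
      show (∑ i, Dd (eS n i) (Ff v) (t, x) ^ 2) = Gf v (t, x) from rfl]
  -- Hessian term collected
  have hrowH : ∀ i j : Fin n, (hess i j (v t) x - l / (2 * t) * (if i = j then (1:ℝ) else 0)) ^ 2
      = Dd (eS n i) (Dd (eS n j) (Ff v)) (t, x) ^ 2
        - (if i = j then (2 * (l / (2 * t)) * Dd (eS n i) (Dd (eS n j) (Ff v)) (t, x) - (l / (2 * t)) ^ 2) else 0) := by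
    intro i j
    rw [hhess i j]
    split_ifs with hij <;> ring
  have hrowH2 : ∀ i : Fin n,
      (∑ j, (hess i j (v t) x - l / (2 * t) * (if i = j then (1:ℝ) else 0)) ^ 2)
        = (∑ j, Dd (eS n i) (Dd (eS n j) (Ff v)) (t, x) ^ 2)
          - (2 * (l / (2 * t)) * Dd (eS n i) (Dd (eS n i) (Ff v)) (t, x) - (l / (2 * t)) ^ 2) := by
    intro i
    rw [Finset.sum_congr rfl fun (j : Fin n) _ => hrowH i j, Finset.sum_sub_distrib,
      Finset.sum_ite_eq Finset.univ i _]
    simp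
  have hhessA : (∑ i, ∑ j, (hess i j (v t) x - l / (2 * t) * (if i = j then (1:ℝ) else 0)) ^ 2)
      = (∑ i, ∑ j, Dd (eS n i) (Dd (eS n j) (Ff v)) (t, x) ^ 2) - (2 * (l / (2 * t)) * Lf v (t, x) - ↑n * (l / (2 * t)) ^ 2) := by
    rw [Finset.sum_congr rfl fun (i : Fin n) _ => hrowH2 i, Finset.sum_sub_distrib,
      Finset.sum_sub_distrib, ← Finset.mul_sum, Finset.sum_const, Finset.card_univ,
      Fintype.card_fin, nsmul_eq_mul,
      show (∑ i, Dd (eS n i) (Dd (eS n i) (Ff v)) (t, x)) = Lf v (t, x) from rfl]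
  -- final assembly
  rw [hDeriv, hDtQ, hDtLA, hDtGA, hFt, hlapPA, hgradA, hhessA,
    show P t x = α * Lf v (t, x) - β * Gf v (t, x) - b * Ff v (t, x) * t⁻¹ - c * ↑n * t⁻¹ from
      (hPfun t ht x).trans rfl,
    hgrad, hvtx]
  field_simp
  ring

end
end

section
/- (Li–Yau estimate on the flat torus.) Let n ≥ 1 and let f : (0,∞) × ℝⁿ → ℝ be a smooth positive solution of the heat equation ∂f/∂t = Δf that is ℤⁿ-periodic in the space variable. Let v = −ln f − (n/2)ln(4πt). Then 2Δv − n/t ≤ 0 for all t > 0 and all x ∈ ℝⁿ; equivalently, |∇f|²/f² − (∂f/∂t)/f ≤ n/(2t). -/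
open MeasureTheory Real
open Filter Topology

noncomputable section

namespace LiYau

variable {n : ℕ}

abbrev EE (n : ℕ) := ℝ × (Fin n → ℝ)

def S (n : ℕ) : Set (EE n) := Set.Ioi 0 ×ˢ Set.univ

lemma isOpen_S : IsOpen (S n) := isOpen_Ioi.prod isOpen_univ

lemma mem_S {p : EE n} : p ∈ S n ↔ 0 < p.1 := by
  simp [S, Set.mem_prod]

/-- directional derivative -/
def Dd (e : EE n) (g : EE n → ℝ) (p : EE n) : ℝ := fderiv ℝ g p e

/-- smooth on S -/
def Sm (g : EE n → ℝ) : Prop := ∀ p ∈ S n, ContDiffAt ℝ (⊤:ℕ∞) g p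

lemma Sm.contDiffAt {g : EE n → ℝ} (hg : Sm g) {p : EE n} (hp : p ∈ S n) :
    ContDiffAt ℝ (⊤:ℕ∞) g p := hg p hp

lemma Sm.diffAt {g : EE n → ℝ} (hg : Sm g) {p : EE n} (hp : p ∈ S n) :
    DifferentiableAt ℝ g p :=
  (hg p hp).differentiableAt (by simp)

lemma contDiffAt_fderiv {g : EE n → ℝ} {p : EE n} (hg : ContDiffAt ℝ (⊤:ℕ∞) g p) :
    ContDiffAt ℝ (⊤:ℕ∞) (fderiv ℝ g) p := by
  refine hg.fderiv_right ?_
  norm_cast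

lemma Sm.Dd {g : EE n → ℝ} (hg : Sm g) (e : EE n) : Sm (Dd e g) := by
  intro p hp
  have h1 : ContDiffAt ℝ (⊤:ℕ∞) (fderiv ℝ g) p := contDiffAt_fderiv (hg p hp)
  have h2 := (ContinuousLinearMap.apply ℝ ℝ e).contDiff.contDiffAt.comp p h1
  exact h2

lemma hasFDerivAt_of_Sm {g : EE n → ℝ} (hg : Sm g) {p : EE n} (hp : p ∈ S n) :
    HasFDerivAt g (fderiv ℝ g p) p := (hg.diffAt hp).hasFDerivAt

/-- Dd of Dd equals second derivative applied -/
lemma Dd_Dd_eq {g : EE n → ℝ} (hg : Sm g) {p : EE n} (hp : p ∈ S n) (e e' : EE n) :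
    Dd e (Dd e' g) p = (fderiv ℝ (fderiv ℝ g) p e) e' := by
  have h1 : ContDiffAt ℝ (⊤:ℕ∞) (fderiv ℝ g) p := contDiffAt_fderiv (hg p hp)
  have h2 : HasFDerivAt (fderiv ℝ g) (fderiv ℝ (fderiv ℝ g) p) p :=
    (h1.differentiableAt (by simp)).hasFDerivAt
  have h3 := (ContinuousLinearMap.apply ℝ ℝ e').hasFDerivAt.comp p h2
  have h4 : HasFDerivAt (fun q => fderiv ℝ g q e')
      ((ContinuousLinearMap.apply ℝ ℝ e').comp (fderiv ℝ (fderiv ℝ g) p)) p := h3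
  have : Dd e (Dd e' g) p =
      ((ContinuousLinearMap.apply ℝ ℝ e').comp (fderiv ℝ (fderiv ℝ g) p)) e := by
    unfold Dd
    rw [h4.fderiv]
  simpa using this

/-- symmetry of second derivatives -/
lemma Dd_comm {g : EE n → ℝ} (hg : Sm g) {p : EE n} (hp : p ∈ S n) (e e' : EE n) :
    Dd e (Dd e' g) p = Dd e' (Dd e g) p := by
  rw [Dd_Dd_eq hg hp, Dd_Dd_eq hg hp]
  have hev : ∀ᶠ y in 𝓝 p, HasFDerivAt g (fderiv ℝ g y) y := by
    have h2 : ContDiffAt ℝ 2 g p := (hg p hp).of_le (by norm_cast)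
    filter_upwards [h2.eventually (by norm_num)] with y hy
    exact (hy.differentiableAt (by norm_num)).hasFDerivAt
  have h2 : HasFDerivAt (fderiv ℝ g) (fderiv ℝ (fderiv ℝ g) p) p :=
    ((contDiffAt_fderiv (hg p hp)).differentiableAt (by simp)).hasFDerivAt
  exact second_derivative_symmetric_of_eventually hev h2 e e'



/-! ### calculus rules -/

lemma Dd_congr {g h : EE n → ℝ} (hgh : ∀ q ∈ S n, g q = h q) {p : EE n} (hp : p ∈ S n)
    (e : EE n) : Dd e g p = Dd e h p := by
  unfold Dd
  have : g =ᶠ[𝓝 p] h := Filter.eventuallyEq_of_mem (isOpen_S.mem_nhds hp) hgh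
  rw [this.fderiv_eq]

lemma Dd_add {g h : EE n → ℝ} {p : EE n} (hg : DifferentiableAt ℝ g p)
    (hh : DifferentiableAt ℝ h p) (e : EE n) :
    Dd e (fun q => g q + h q) p = Dd e g p + Dd e h p := by
  unfold Dd; rw [fderiv_fun_add hg hh]; simp

lemma Dd_neg {g : EE n → ℝ} {p : EE n} (e : EE n) :
    Dd e (fun q => -g q) p = -Dd e g p := by
  unfold Dd; rw [fderiv_fun_neg]; simp

lemma Dd_sub {g h : EE n → ℝ} {p : EE n} (hg : DifferentiableAt ℝ g p)
    (hh : DifferentiableAt ℝ h p) (e : EE n) :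
    Dd e (fun q => g q - h q) p = Dd e g p - Dd e h p := by
  unfold Dd; rw [fderiv_fun_sub hg hh]; simp

lemma Dd_const (c : ℝ) (p e : EE n) : Dd e (fun _ => c) p = 0 := by
  unfold Dd; rw [fderiv_fun_const]; simp

lemma Dd_mul {g h : EE n → ℝ} {p : EE n} (hg : DifferentiableAt ℝ g p)
    (hh : DifferentiableAt ℝ h p) (e : EE n) :
    Dd e (fun q => g q * h q) p = Dd e g p * h p + g p * Dd e h p := by
  unfold Dd; rw [fderiv_fun_mul hg hh]; simp; ring

lemma Dd_sq {g : EE n → ℝ} {p : EE n} (hg : DifferentiableAt ℝ g p) (e : EE n) :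
    Dd e (fun q => (g q) ^ 2) p = 2 * g p * Dd e g p := by
  have := Dd_mul hg hg e
  have h2 : (fun q => g q * g q) = fun q => (g q) ^ 2 := by ext q; ring
  rw [h2] at this
  rw [this]; ring

lemma Dd_sum {ι : Type*} {u : Finset ι} {A : ι → EE n → ℝ} {p : EE n}
    (hA : ∀ i ∈ u, DifferentiableAt ℝ (A i) p) (e : EE n) :
    Dd e (fun q => ∑ i ∈ u, A i q) p = ∑ i ∈ u, Dd e (A i) p := by
  unfold Dd; rw [fderiv_fun_sum hA]; simp

lemma Dd_log {g : EE n → ℝ} {p : EE n} (hg : DifferentiableAt ℝ g p) (hgp : g p ≠ 0)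
    (e : EE n) : Dd e (fun q => Real.log (g q)) p = Dd e g p / g p := by
  have h := (hg.hasFDerivAt.log hgp).fderiv
  unfold Dd
  rw [h]
  simp [div_eq_inv_mul]

lemma Sm.add {g h : EE n → ℝ} (hg : Sm g) (hh : Sm h) : Sm (fun q => g q + h q) :=
  fun p hp => (hg p hp).add (hh p hp)

lemma Sm.neg {g : EE n → ℝ} (hg : Sm g) : Sm (fun q => -g q) :=
  fun p hp => (hg p hp).neg

lemma Sm.sub {g h : EE n → ℝ} (hg : Sm g) (hh : Sm h) : Sm (fun q => g q - h q) :=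
  fun p hp => (hg p hp).sub (hh p hp)

lemma Sm.mul {g h : EE n → ℝ} (hg : Sm g) (hh : Sm h) : Sm (fun q => g q * h q) :=
  fun p hp => (hg p hp).mul (hh p hp)

lemma Sm.sq {g : EE n → ℝ} (hg : Sm g) : Sm (fun q => (g q) ^ 2) := by
  have := hg.mul hg
  have h2 : (fun q => g q * g q) = fun q => (g q) ^ 2 := by ext q; ring
  rwa [h2] at this

lemma Sm.sum {ι : Type*} {u : Finset ι} {A : ι → EE n → ℝ}
    (hA : ∀ i ∈ u, Sm (A i)) : Sm (fun q => ∑ i ∈ u, A i q) := by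
  intro p hp
  exact ContDiffAt.sum (fun i hi => hA i hi p hp)

lemma Sm_const (c : ℝ) : Sm (fun _ : EE n => c) := fun p _ => contDiffAt_const

lemma Sm_fst : Sm (fun q : EE n => q.1) := fun p _ => contDiffAt_fst

lemma Dd_fst (p e : EE n) : Dd e (fun q : EE n => q.1) p = e.1 := by
  unfold Dd
  rw [(hasFDerivAt_fst (p := p)).fderiv]
  rfl

/-! ### bridging slice and joint derivatives -/

def ev (i : Fin n) : EE n := (0, Pi.single i 1)
def et : EE n := ((1:ℝ), (0 : Fin n → ℝ))

lemma bridge_x {g : EE n → ℝ} (hg : Sm g) {t : ℝ} (ht : 0 < t) (x : Fin n → ℝ) (i : Fin n) :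
    pd i (fun y => g (t, y)) x = Dd (ev i) g (t, x) := by
  have hp : ((t, x) : EE n) ∈ S n := mem_S.2 ht
  have hι : HasFDerivAt (fun y : Fin n → ℝ => ((t, y) : EE n))
      ((ContinuousLinearMap.inr ℝ ℝ (Fin n → ℝ))) x := by
    exact HasFDerivAt.prodMk (hasFDerivAt_const t x) (hasFDerivAt_id x)
  have hc : HasFDerivAt (fun y => g (t, y))
      ((fderiv ℝ g (t, x)).comp (ContinuousLinearMap.inr ℝ ℝ (Fin n → ℝ))) x :=
    (hasFDerivAt_of_Sm hg hp).comp x hι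
  unfold pd
  rw [hc.fderiv]
  rfl

lemma bridge_t {g : EE n → ℝ} (hg : Sm g) {t : ℝ} (ht : 0 < t) (x : Fin n → ℝ) :
    deriv (fun s => g (s, x)) t = Dd et g (t, x) := by
  have hp : ((t, x) : EE n) ∈ S n := mem_S.2 ht
  have hι : HasDerivAt (fun s : ℝ => ((s, x) : EE n)) ((1:ℝ), (0 : Fin n → ℝ)) t :=
    HasDerivAt.prodMk (hasDerivAt_id t) (hasDerivAt_const t x)
  have hc : HasDerivAt (fun s => g (s, x)) ((fderiv ℝ g (t, x)) ((1:ℝ), (0 : Fin n → ℝ))) t :=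
    (hasFDerivAt_of_Sm hg hp).comp_hasDerivAt t hι
  rw [hc.deriv]
  rfl

lemma hasDerivAt_line {g : EE n → ℝ} (hg : Sm g) {p e : EE n} {s₀ : ℝ}
    (hq : p + s₀ • e ∈ S n) :
    HasDerivAt (fun s => g (p + s • e)) (Dd e g (p + s₀ • e)) s₀ := by
  have hline : HasDerivAt (fun s : ℝ => p + s • e) e s₀ := by
    simpa using ((hasDerivAt_id s₀).smul_const e).const_add p
  exact (hasFDerivAt_of_Sm hg hq).comp_hasDerivAt s₀ hline

/-! ### periodicity -/

def Per (g : EE n → ℝ) : Prop :=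
  ∀ p ∈ S n, ∀ m : Fin n → ℤ, g (p + ((0:ℝ), fun i => (m i : ℝ))) = g p

lemma Per.Dd {g : EE n → ℝ} (hg : Sm g) (hpg : Per g) (e : EE n) : Per (LiYau.Dd e g) := by
  intro p hp m
  set c : EE n := ((0:ℝ), fun i => (m i : ℝ)) with hc
  have hpc : p + c ∈ S n := by
    rw [mem_S] at hp ⊢
    simpa [hc] using hp
  have hτ : HasFDerivAt (fun q : EE n => q + c) (ContinuousLinearMap.id ℝ (EE n)) p :=
    (hasFDerivAt_id p).add_const c
  have hcomp := (hasFDerivAt_of_Sm hg hpc).comp p hτ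
  have heq : (fun q => g (q + c)) =ᶠ[𝓝 p] g :=
    Filter.eventuallyEq_of_mem (isOpen_S.mem_nhds hp) (fun q hq => hpg q hq m)
  have h1 : fderiv ℝ (fun q => g (q + c)) p = fderiv ℝ g p := heq.fderiv_eq
  have h2 : fderiv ℝ (fun q => g (q + c)) p = (fderiv ℝ g (p + c)).comp
      (ContinuousLinearMap.id ℝ (EE n)) := hcomp.fderiv
  unfold LiYau.Dd
  rw [← h1, h2]
  rfl



lemma Dd_const_mul {g : EE n → ℝ} {p : EE n} (hg : DifferentiableAt ℝ g p) (c : ℝ) (e : EE n) :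
    Dd e (fun q => c * g q) p = c * Dd e g p := by
  unfold Dd; rw [fderiv_const_mul hg]; simp

lemma Dd_inv {g : EE n → ℝ} {p : EE n} (hg : DifferentiableAt ℝ g p) (hgp : g p ≠ 0)
    (e : EE n) : Dd e (fun q => (g q)⁻¹) p = -Dd e g p / g p ^ 2 := by
  have hc : HasFDerivAt (fun q => (g q)⁻¹)
      ((ContinuousLinearMap.smulRight (1 : ℝ →L[ℝ] ℝ) (-((g p) ^ 2)⁻¹)).comp (fderiv ℝ g p)) p :=
    (hasFDerivAt_inv hgp).comp p hg.hasFDerivAt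
  unfold Dd
  rw [hc.fderiv]
  simp
  ring

lemma Dd_div {g h : EE n → ℝ} {p : EE n} (hg : DifferentiableAt ℝ g p)
    (hh : DifferentiableAt ℝ h p) (hhp : h p ≠ 0) (e : EE n) :
    Dd e (fun q => g q / h q) p = (Dd e g p * h p - g p * Dd e h p) / h p ^ 2 := by
  have h1 : (fun q => g q / h q) = fun q => g q * (h q)⁻¹ := by
    ext q; rw [div_eq_mul_inv]
  rw [h1, Dd_mul (h := fun q => (h q)⁻¹) hg (hh.inv hhp) e, Dd_inv hh hhp e]
  field_simp
  ring

/-! ### the functions u and w -/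

def uu (F : EE n → ℝ) : EE n → ℝ := fun p => Real.log (F p)

def ww (F : EE n → ℝ) : EE n → ℝ := fun p => -(∑ i, Dd (ev i) (Dd (ev i) (uu F)) p)

lemma Sm_uu {F : EE n → ℝ} (hF : Sm F) (hFpos : ∀ p ∈ S n, 0 < F p) : Sm (uu F) :=
  fun p hp => (hF p hp).log (ne_of_gt (hFpos p hp))

lemma Sm_ww {F : EE n → ℝ} (hF : Sm F) (hFpos : ∀ p ∈ S n, 0 < F p) : Sm (ww F) :=
  (Sm.sum (fun i _ => ((Sm_uu hF hFpos).Dd (ev i)).Dd (ev i))).neg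

lemma Dd_uu {F : EE n → ℝ} (hF : Sm F) (hFpos : ∀ p ∈ S n, 0 < F p) {p : EE n}
    (hp : p ∈ S n) (e : EE n) : Dd e (uu F) p = Dd e F p / F p :=
  Dd_log (hF.diffAt hp) (ne_of_gt (hFpos p hp)) e

lemma DdDd_uu {F : EE n → ℝ} (hF : Sm F) (hFpos : ∀ p ∈ S n, 0 < F p) {p : EE n}
    (hp : p ∈ S n) (e : EE n) :
    Dd e (Dd e (uu F)) p
      = Dd e (Dd e F) p / F p - (Dd e F p / F p) ^ 2 := by
  have h1 : Dd e (Dd e (uu F)) p = Dd e (fun q => Dd e F q / F q) p :=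
    Dd_congr (fun q hq => Dd_uu hF hFpos hq e) hp e
  rw [h1, Dd_div ((hF.Dd e).diffAt hp) (hF.diffAt hp) (ne_of_gt (hFpos p hp)) e]
  have hFp := ne_of_gt (hFpos p hp)
  field_simp

/-- joint heat equation transfer -/
lemma ut_eq {F : EE n → ℝ} (hF : Sm F) (hFpos : ∀ p ∈ S n, 0 < F p)
    (hheatJ : ∀ p ∈ S n, Dd et F p = ∑ i, Dd (ev i) (Dd (ev i) F) p) {p : EE n}
    (hp : p ∈ S n) :
    Dd et (uu F) p = (∑ i, (Dd (ev i) (uu F) p) ^ 2) - ww F p := by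
  have h1 : Dd et (uu F) p = Dd et F p / F p := Dd_uu hF hFpos hp et
  have hFp := ne_of_gt (hFpos p hp)
  rw [h1, hheatJ p hp]
  unfold ww
  have h2 : ∀ i, Dd (ev i) (Dd (ev i) (uu F)) p
      = Dd (ev i) (Dd (ev i) F) p / F p - (Dd (ev i) F p / F p) ^ 2 :=
    fun i => DdDd_uu hF hFpos hp (ev i)
  have h3 : ∀ i, Dd (ev i) (uu F) p = Dd (ev i) F p / F p :=
    fun i => Dd_uu hF hFpos hp (ev i)
  simp only [h2, h3]
  rw [Finset.sum_sub_distrib, Finset.sum_div]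
  ring



lemma bochner {F : EE n → ℝ} (hF : Sm F) (hFpos : ∀ p ∈ S n, 0 < F p)
    (hheatJ : ∀ p ∈ S n, Dd et F p = ∑ i, Dd (ev i) (Dd (ev i) F) p) {p : EE n}
    (hp : p ∈ S n) :
    Dd et (ww F) p = (∑ i, Dd (ev i) (Dd (ev i) (ww F)) p)
      + 2 * ∑ j, Dd (ev j) (uu F) p * Dd (ev j) (ww F) p
      - 2 * ∑ i, ∑ j, (Dd (ev i) (Dd (ev j) (uu F)) p) ^ 2 := by
  set u := uu F with hu_def
  set w := ww F with hw_def
  have hu : Sm u := Sm_uu hF hFpos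
  have hw : Sm w := Sm_ww hF hFpos
  -- B is the right-hand side of the equation for u_t
  set B : EE n → ℝ := fun q => (∑ j, (Dd (ev j) u q) ^ 2) - w q with hB_def
  have hB : Sm B := Sm.sub (Sm.sum (fun j _ => (hu.Dd (ev j)).sq)) hw
  -- Step A : Dd et u = B on S
  have hA : ∀ q ∈ S n, Dd et u q = B q := fun q hq => ut_eq hF hFpos hheatJ hq
  -- Step B : Dd et w p = -∑ i, Dd (ev i) (Dd (ev i) B) p
  have hStepB : Dd et w p = -∑ i, Dd (ev i) (Dd (ev i) B) p := by
    have h1 : Dd et w p = -∑ i, Dd et (Dd (ev i) (Dd (ev i) u)) p := by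
      rw [hw_def]
      show Dd et (fun q => -(∑ i, Dd (ev i) (Dd (ev i) u) q)) p = _
      rw [Dd_neg, Dd_sum (fun i _ => ((hu.Dd (ev i)).Dd (ev i)).diffAt hp)]
    rw [h1]
    congr 1
    apply Finset.sum_congr rfl
    intro i _
    calc Dd et (Dd (ev i) (Dd (ev i) u)) p
        = Dd (ev i) (Dd et (Dd (ev i) u)) p := Dd_comm (hu.Dd (ev i)) hp et (ev i)
      _ = Dd (ev i) (Dd (ev i) (Dd et u)) p :=
          Dd_congr (fun q hq => Dd_comm hu hq et (ev i)) hp (ev i)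
      _ = Dd (ev i) (Dd (ev i) B) p := by
          apply Dd_congr (fun q hq => ?_) hp (ev i)
          exact Dd_congr hA hq (ev i)
  -- Step C : expansion of Dd (ev i) (Dd (ev i) B) p
  have hStepC : ∀ i, Dd (ev i) (Dd (ev i) B) p
      = (∑ j, (2 * (Dd (ev i) (Dd (ev j) u) p) ^ 2
          + 2 * Dd (ev j) u p * Dd (ev i) (Dd (ev i) (Dd (ev j) u)) p))
        - Dd (ev i) (Dd (ev i) w) p := by
    intro i
    -- first derivative of B
    have hDB : ∀ q ∈ S n, Dd (ev i) B q
        = (∑ j, 2 * Dd (ev j) u q * Dd (ev i) (Dd (ev j) u) q) - Dd (ev i) w q := by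
      intro q hq
      rw [hB_def]
      show Dd (ev i) (fun q => (∑ j, (Dd (ev j) u q) ^ 2) - w q) q = _
      rw [Dd_sub ((Sm.sum (fun j _ => (hu.Dd (ev j)).sq)).diffAt hq) (hw.diffAt hq),
        Dd_sum (fun j _ => ((hu.Dd (ev j)).sq).diffAt hq)]
      congr 1
      apply Finset.sum_congr rfl
      intro j _
      exact Dd_sq ((hu.Dd (ev j)).diffAt hq) (ev i)
    have h2 : Dd (ev i) (Dd (ev i) B) p
        = Dd (ev i) (fun q => (∑ j, 2 * Dd (ev j) u q * Dd (ev i) (Dd (ev j) u) q)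
            - Dd (ev i) w q) p := Dd_congr hDB hp (ev i)
    rw [h2]
    have hdiffprod : ∀ j, Sm (fun q => Dd (ev j) u q * Dd (ev i) (Dd (ev j) u) q) :=
      fun j => (hu.Dd (ev j)).mul ((hu.Dd (ev j)).Dd (ev i))
    have hdiff2 : ∀ j, Sm (fun q => 2 * Dd (ev j) u q * Dd (ev i) (Dd (ev j) u) q) := by
      intro j
      have := (Sm_const (2:ℝ)).mul (hdiffprod j)
      have heq : (fun q => (2:ℝ) * (Dd (ev j) u q * Dd (ev i) (Dd (ev j) u) q))
          = fun q => 2 * Dd (ev j) u q * Dd (ev i) (Dd (ev j) u) q := by ext q; ring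
      rwa [heq] at this
    rw [Dd_sub ((Sm.sum (fun j _ => hdiff2 j)).diffAt hp) ((hw.Dd (ev i)).diffAt hp),
      Dd_sum (fun j _ => (hdiff2 j).diffAt hp)]
    congr 1
    apply Finset.sum_congr rfl
    intro j _
    have heq : (fun q => 2 * Dd (ev j) u q * Dd (ev i) (Dd (ev j) u) q)
        = fun q => (2:ℝ) * (Dd (ev j) u q * Dd (ev i) (Dd (ev j) u) q) := by ext q; ring
    rw [heq, Dd_const_mul ((hdiffprod j).diffAt hp) 2,
      Dd_mul ((hu.Dd (ev j)).diffAt hp) (((hu.Dd (ev j)).Dd (ev i)).diffAt hp)]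
    ring
  -- Step D+E : summing third derivatives
  have hStepE : ∀ j, ∑ i, Dd (ev i) (Dd (ev i) (Dd (ev j) u)) p = -Dd (ev j) w p := by
    intro j
    have hD : ∀ i, Dd (ev i) (Dd (ev i) (Dd (ev j) u)) p
        = Dd (ev j) (Dd (ev i) (Dd (ev i) u)) p := by
      intro i
      calc Dd (ev i) (Dd (ev i) (Dd (ev j) u)) p
          = Dd (ev i) (Dd (ev j) (Dd (ev i) u)) p := by
            apply Dd_congr (fun q hq => ?_) hp (ev i)
            exact Dd_comm hu hq (ev i) (ev j)
        _ = Dd (ev j) (Dd (ev i) (Dd (ev i) u)) p := Dd_comm (hu.Dd (ev i)) hp (ev i) (ev j)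
    simp only [hD]
    rw [← Dd_sum (fun i _ => ((hu.Dd (ev i)).Dd (ev i)).diffAt hp) (ev j)]
    have heq : (fun q => ∑ i, Dd (ev i) (Dd (ev i) u) q) = fun q => -w q := by
      ext q
      rw [hw_def]
      show _ = -ww F q
      unfold ww
      rw [neg_neg]
    rw [heq, Dd_neg]
  -- assemble
  rw [hStepB]
  simp only [hStepC]
  rw [Finset.sum_sub_distrib]
  have hsplit : ∀ i, (∑ j, (2 * (Dd (ev i) (Dd (ev j) u) p) ^ 2
        + 2 * Dd (ev j) u p * Dd (ev i) (Dd (ev i) (Dd (ev j) u)) p))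
      = (∑ j, 2 * (Dd (ev i) (Dd (ev j) u) p) ^ 2)
        + ∑ j, 2 * Dd (ev j) u p * Dd (ev i) (Dd (ev i) (Dd (ev j) u)) p := by
    intro i
    rw [Finset.sum_add_distrib]
  simp only [hsplit]
  rw [Finset.sum_add_distrib]
  have hswap : ∑ i, ∑ j, 2 * Dd (ev j) u p * Dd (ev i) (Dd (ev i) (Dd (ev j) u)) p
      = ∑ j, 2 * Dd (ev j) u p * (-Dd (ev j) w p) := by
    rw [Finset.sum_comm]
    apply Finset.sum_congr rfl
    intro j _
    rw [← hStepE j, Finset.mul_sum]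
  rw [hswap]
  have hsq : ∑ i, ∑ j, 2 * (Dd (ev i) (Dd (ev j) u) p) ^ 2
      = 2 * ∑ i, ∑ j, (Dd (ev i) (Dd (ev j) u) p) ^ 2 := by
    rw [Finset.mul_sum]
    apply Finset.sum_congr rfl
    intro i _
    rw [Finset.mul_sum]
  rw [hsq]
  have hlin : ∑ j, 2 * Dd (ev j) u p * (-Dd (ev j) w p)
      = -(2 * ∑ j, Dd (ev j) u p * Dd (ev j) w p) := by
    rw [Finset.mul_sum, ← Finset.sum_neg_distrib]
    apply Finset.sum_congr rfl
    intro j _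
    ring
  rw [hlin]
  ring



/-! ### one-dimensional lemmas for the maximum principle -/

lemma key1d {g g' : ℝ → ℝ} {d : ℝ} (hg : ∀ s, HasDerivAt g (g' s) s)
    (hg' : HasDerivAt g' d 0) (hmax : ∀ s, g s ≤ g 0) : d ≤ 0 := by
  by_contra hd
  push_neg at hd
  have h0 : g' 0 = 0 := by
    have hlm : IsLocalMax g 0 := Filter.Eventually.of_forall hmax
    exact hlm.hasDerivAt_eq_zero (hg 0)
  have hslope : Filter.Tendsto (slope g' 0) (𝓝[>] 0) (𝓝 d) :=
    (hasDerivAt_iff_tendsto_slope.1 hg').mono_left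
      (nhdsWithin_mono 0 (fun s hs => ne_of_gt hs))
  have hev : ∀ᶠ s in 𝓝[>] (0:ℝ), 0 < slope g' 0 s := hslope.eventually (lt_mem_nhds hd)
  obtain ⟨δ, hδ, hsub⟩ := mem_nhdsGT_iff_exists_Ioo_subset.1 hev
  have hδ0 : 0 < δ := hδ
  have hpos : ∀ s ∈ Set.Ioo (0:ℝ) δ, 0 < g' s := by
    intro s hs
    have := hsub hs
    simp only [Set.mem_setOf_eq, slope_def_field] at this
    have hs0 : 0 < s := hs.1
    have h3 : 0 < (g' s - g' 0) / (s - 0) := this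
    rw [h0, sub_zero, sub_zero] at h3
    rcases div_pos_iff.1 h3 with ⟨ha, _⟩ | ⟨_, hb⟩
    · exact ha
    · linarith
  have hmono : StrictMonoOn g (Set.Icc 0 δ) := by
    apply strictMonoOn_of_deriv_pos (convex_Icc 0 δ)
    · exact fun s _ => (hg s).continuousAt.continuousWithinAt
    · intro s hs
      rw [interior_Icc] at hs
      rw [(hg s).deriv]
      exact hpos s hs
  have h1 : g 0 < g (δ/2) := by
    have := hmono (Set.left_mem_Icc.2 (le_of_lt hδ0))
      (Set.mem_Icc.2 ⟨le_of_lt (half_pos hδ0), le_of_lt (half_lt_self hδ0)⟩) (half_pos hδ0)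
    exact this
  exact absurd (hmax (δ/2)) (not_le.2 h1)

lemma deriv_nonneg_left {ψ : ℝ → ℝ} {D a b : ℝ} (hab : a < b) (h : HasDerivAt ψ D b)
    (hle : ∀ t, a ≤ t → t ≤ b → ψ t ≤ ψ b) : 0 ≤ D := by
  have hslope : Filter.Tendsto (slope ψ b) (𝓝[<] b) (𝓝 D) :=
    (hasDerivAt_iff_tendsto_slope.1 h).mono_left
      (nhdsWithin_mono b (fun s hs => ne_of_lt hs))
  refine ge_of_tendsto hslope ?_
  filter_upwards [Ioo_mem_nhdsLT_of_mem (Set.mem_Ioc.2 ⟨hab, le_refl b⟩)] with t ht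
  rw [slope_def_field]
  have h1 : ψ t - ψ b ≤ 0 := sub_nonpos.2 (hle t (le_of_lt ht.1) (le_of_lt ht.2))
  have h2 : t - b < 0 := sub_neg.2 ht.2
  have := div_nonneg (neg_nonneg.2 h1) (neg_nonneg.2 h2.le)
  rwa [neg_div_neg_eq] at this



lemma mem_S_add_smul_ev {p₀ : EE n} (hp₀ : p₀ ∈ S n) (i : Fin n) (s : ℝ) :
    p₀ + s • ev i ∈ S n := by
  rw [mem_S] at hp₀ ⊢
  show 0 < p₀.1 + s * (0:ℝ)
  simpa using hp₀

lemma spatial_test {Φ : EE n → ℝ} (hΦ : Sm Φ) {p₀ : EE n} (hp₀ : p₀ ∈ S n) (i : Fin n)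
    (hmax : ∀ s : ℝ, Φ (p₀ + s • ev i) ≤ Φ p₀) :
    Dd (ev i) Φ p₀ = 0 ∧ Dd (ev i) (Dd (ev i) Φ) p₀ ≤ 0 := by
  set g : ℝ → ℝ := fun s => Φ (p₀ + s • ev i) with hg_def
  set g' : ℝ → ℝ := fun s => Dd (ev i) Φ (p₀ + s • ev i) with hg'_def
  have hzero : p₀ + (0:ℝ) • ev i = p₀ := by simp
  have hg : ∀ s, HasDerivAt g (g' s) s := fun s =>
    hasDerivAt_line hΦ (mem_S_add_smul_ev hp₀ i s)
  have hmax' : ∀ s, g s ≤ g 0 := by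
    intro s
    simp only [hg_def, hzero]
    exact hmax s
  have hg'0 : HasDerivAt g' (Dd (ev i) (Dd (ev i) Φ) p₀) 0 := by
    have := hasDerivAt_line (hΦ.Dd (ev i)) (p := p₀) (e := ev i) (s₀ := 0)
      (by rw [hzero]; exact hp₀)
    rwa [hzero] at this
  constructor
  · have hlm : IsLocalMax g 0 := Filter.Eventually.of_forall hmax'
    have := hlm.hasDerivAt_eq_zero (hg 0)
    simpa [hg'_def, hzero] using this
  · exact key1d hg hg'0 hmax'

lemma time_test {Φ : EE n → ℝ} (hΦ : Sm Φ) {p₀ : EE n} (hp₀ : p₀ ∈ S n) {a : ℝ}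
    (ha : 0 < a) (hat : a < p₀.1)
    (hmax : ∀ t, a ≤ t → t ≤ p₀.1 → Φ (t, p₀.2) ≤ Φ p₀) :
    0 ≤ Dd et Φ p₀ := by
  set ψ : ℝ → ℝ := fun s => Φ (p₀ + s • et) with hψ_def
  have hzero : p₀ + (0:ℝ) • et = p₀ := by simp
  have hmem : ∀ s : ℝ, a - p₀.1 ≤ s → p₀ + s • et ∈ S n := by
    intro s hs
    rw [mem_S]
    show 0 < p₀.1 + s * (1:ℝ)
    rw [mem_S] at hp₀
    nlinarith
  have hψD : HasDerivAt ψ (Dd et Φ p₀) 0 := by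
    have := hasDerivAt_line hΦ (p := p₀) (e := et) (s₀ := 0) (by rw [hzero]; exact hp₀)
    rwa [hzero] at this
  refine deriv_nonneg_left (a := a - p₀.1) (b := 0) (by linarith) hψD ?_
  intro s hs1 hs2
  have hpt : p₀ + s • et = (p₀.1 + s, p₀.2) := by
    show (p₀.1 + s * 1, p₀.2 + s • (0 : Fin n → ℝ)) = _
    simp
  simp only [hψ_def, hzero, hpt]
  exact hmax (p₀.1 + s) (by linarith) (by linarith)



lemma cs_trace {H : Fin n → Fin n → ℝ} : (∑ i, H i i) ^ 2 ≤ n * ∑ i, ∑ j, (H i j) ^ 2 := by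
  have h1 : (∑ i, (1:ℝ) * H i i) ^ 2 ≤ (∑ i : Fin n, (1:ℝ) ^ 2) * ∑ i, (H i i) ^ 2 :=
    Finset.sum_mul_sq_le_sq_mul_sq Finset.univ 1 (fun i => H i i)
  simp only [one_mul, one_pow, Finset.sum_const, Finset.card_univ, Fintype.card_fin,
    nsmul_eq_mul, mul_one] at h1
  have h2 : ∑ i, (H i i) ^ 2 ≤ ∑ i, ∑ j, (H i j) ^ 2 := by
    apply Finset.sum_le_sum
    intro i _
    exact Finset.single_le_sum (fun j _ => sq_nonneg (H i j)) (Finset.mem_univ i)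
  calc (∑ i, H i i) ^ 2 ≤ (n:ℝ) * ∑ i, (H i i) ^ 2 := h1
    _ ≤ (n:ℝ) * ∑ i, ∑ j, (H i j) ^ 2 := by
        apply mul_le_mul_of_nonneg_left h2 (by positivity)

lemma Per_ww {F : EE n → ℝ} (hF : Sm F) (hFpos : ∀ p ∈ S n, 0 < F p) (hPF : Per F) :
    Per (ww F) := by
  have hu : Sm (uu F) := Sm_uu hF hFpos
  have hPu : Per (uu F) := by
    intro p hp m
    unfold uu
    rw [hPF p hp m]
  intro p hp m
  unfold ww
  congr 1
  apply Finset.sum_congr rfl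
  intro i _
  exact Per.Dd (hu.Dd (ev i)) (Per.Dd hu hPu (ev i)) (ev i) p hp m

lemma max_bound {F : EE n → ℝ} (hn : 1 ≤ n) (hF : Sm F) (hFpos : ∀ p ∈ S n, 0 < F p)
    (hheatJ : ∀ p ∈ S n, Dd et F p = ∑ i, Dd (ev i) (Dd (ev i) F) p) (hPF : Per F)
    {ε T : ℝ} (hε : 0 < ε) (hεT : ε < T) (x : Fin n → ℝ) :
    (T - ε) * ww F (T, x) ≤ (n : ℝ) / 2 := by
  have hn' : (0:ℝ) < n := by exact_mod_cast Nat.lt_of_lt_of_le Nat.zero_lt_one hn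
  set w := ww F with hw_def
  have hw : Sm w := Sm_ww hF hFpos
  have hPw : Per w := Per_ww hF hFpos hPF
  set Φ : EE n → ℝ := fun p => (p.1 - ε) * w p with hΦ_def
  have hτ : Sm (fun p : EE n => p.1 - ε) := Sm.sub Sm_fst (Sm_const ε)
  have hΦ : Sm Φ := hτ.mul hw
  have hDdτ : ∀ (q e : EE n), Dd e (fun p : EE n => p.1 - ε) q = e.1 := by
    intro q e
    rw [Dd_sub differentiableAt_fst (differentiableAt_const ε), Dd_fst, Dd_const, sub_zero]
  have hDΦ : ∀ q ∈ S n, ∀ e, Dd e Φ q = e.1 * w q + (q.1 - ε) * Dd e w q := by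
    intro q hq e
    rw [hΦ_def]
    show Dd e (fun p => (p.1 - ε) * w p) q = _
    rw [Dd_mul (hτ.diffAt hq) (hw.diffAt hq), hDdτ]
  set K : Set (EE n) := Set.Icc ε T ×ˢ Set.Icc (0 : Fin n → ℝ) 1 with hK_def
  have hKS : ∀ p ∈ K, p ∈ S n := by
    intro p hp
    rw [mem_S]
    exact lt_of_lt_of_le hε hp.1.1
  have hKc : IsCompact K := isCompact_Icc.prod isCompact_Icc
  have hKne : K.Nonempty := ⟨(ε, 0), ⟨Set.left_mem_Icc.2 (le_of_lt hεT),
    Set.left_mem_Icc.2 zero_le_one⟩⟩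
  have hcont : ContinuousOn Φ K := fun p hp =>
    (hΦ p (hKS p hp)).continuousAt.continuousWithinAt
  obtain ⟨p₀, hp₀K, hmaxK⟩ := hKc.exists_isMaxOn hKne hcont
  set M := Φ p₀ with hM_def
  have hPΦ : Per Φ := by
    intro p hp m
    rw [hΦ_def]
    show ((p + ((0:ℝ), fun i => (m i : ℝ))).1 - ε) * w (p + _) = (p.1 - ε) * w p
    rw [hPw p hp m]
    norm_num
  have hglobal : ∀ t, ε ≤ t → t ≤ T → ∀ y : Fin n → ℝ, Φ (t, y) ≤ M := by
    intro t ht1 ht2 y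
    set m : Fin n → ℤ := fun i => ⌊y i⌋ with hm_def
    set y' : Fin n → ℝ := fun i => Int.fract (y i) with hy'_def
    have hy'K : ((t, y') : EE n) ∈ K := by
      refine ⟨Set.mem_Icc.2 ⟨ht1, ht2⟩, Set.mem_Icc.2 ⟨?_, ?_⟩⟩
      · intro i
        exact Int.fract_nonneg (y i)
      · intro i
        exact le_of_lt (Int.fract_lt_one (y i))
    have hsum : ((t, y') : EE n) + ((0:ℝ), fun i => (m i : ℝ)) = (t, y) := by
      refine Prod.ext (by simp) ?_
      show y' + (fun i => (m i : ℝ)) = y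
      funext i
      show Int.fract (y i) + (⌊y i⌋ : ℝ) = y i
      exact Int.fract_add_floor (y i)
    have := hPΦ (t, y') (hKS _ hy'K) m
    rw [hsum] at this
    rw [this]
    exact hmaxK hy'K
  suffices hM : M ≤ (n:ℝ) / 2 by
    have h1 := hglobal T (le_of_lt hεT) le_rfl x
    calc (T - ε) * w (T, x) = Φ (T, x) := rfl
      _ ≤ M := h1
      _ ≤ (n:ℝ)/2 := hM
  by_contra hMc
  push_neg at hMc
  have hM0 : 0 < M := lt_trans (by positivity) hMc
  have hp₀S : p₀ ∈ S n := hKS p₀ hp₀K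
  obtain ⟨hp₀t, hp₀x⟩ := hp₀K
  have ht₀ : ε < p₀.1 := by
    rcases lt_or_eq_of_le hp₀t.1 with h | h
    · exact h
    · exfalso
      have : M = 0 := by
        rw [hM_def, hΦ_def]
        show (p₀.1 - ε) * w p₀ = 0
        rw [← h]
        ring
      linarith
  have hc : (0:ℝ) < p₀.1 - ε := by linarith
  -- spatial tests
  have hspace : ∀ i : Fin n, Dd (ev i) Φ p₀ = 0 ∧ Dd (ev i) (Dd (ev i) Φ) p₀ ≤ 0 := by
    intro i
    apply spatial_test hΦ hp₀S i
    intro s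
    have hpt : p₀ + s • ev i = ((p₀.1, p₀.2 + s • (Pi.single i (1:ℝ) : Fin n → ℝ)) : EE n) := by
      refine Prod.ext ?_ rfl
      show p₀.1 + s * 0 = p₀.1
      ring
    rw [hpt]
    exact hglobal p₀.1 hp₀t.1 hp₀t.2 _
  -- time test
  have htime : 0 ≤ Dd et Φ p₀ := by
    apply time_test hΦ hp₀S hε ht₀
    intro t h1 h2
    have := hglobal t h1 (le_trans h2 hp₀t.2) p₀.2
    simpa using this
  -- translate: first spatial derivatives of w vanish
  have hwi : ∀ i : Fin n, Dd (ev i) w p₀ = 0 := by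
    intro i
    have h1 := (hspace i).1
    rw [hDΦ p₀ hp₀S (ev i)] at h1
    have hev1 : (ev i).1 = (0:ℝ) := rfl
    rw [hev1] at h1
    have : (p₀.1 - ε) * Dd (ev i) w p₀ = 0 := by linarith
    exact (mul_eq_zero.1 this).resolve_left (ne_of_gt hc)
  -- second spatial derivatives of Φ in terms of w
  have hΦii : ∀ i : Fin n, Dd (ev i) (Dd (ev i) Φ) p₀
      = (p₀.1 - ε) * Dd (ev i) (Dd (ev i) w) p₀ := by
    intro i
    have hfun : ∀ q ∈ S n, Dd (ev i) Φ q = (fun q : EE n => (q.1 - ε) * Dd (ev i) w q) q := by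
      intro q hq
      rw [hDΦ q hq (ev i)]
      have hev1 : (ev i).1 = (0:ℝ) := rfl
      rw [hev1]
      ring
    rw [Dd_congr hfun hp₀S (ev i),
      Dd_mul (hτ.diffAt hp₀S) ((hw.Dd (ev i)).diffAt hp₀S), hDdτ]
    have hev1 : (ev i).1 = (0:ℝ) := rfl
    rw [hev1, hwi i]
    ring
  have hΔw : ∑ i, Dd (ev i) (Dd (ev i) w) p₀ ≤ 0 := by
    have h1 : ∑ i, Dd (ev i) (Dd (ev i) Φ) p₀ ≤ 0 :=
      Finset.sum_nonpos (fun i _ => (hspace i).2)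
    have h2 : ∑ i, Dd (ev i) (Dd (ev i) Φ) p₀
        = (p₀.1 - ε) * ∑ i, Dd (ev i) (Dd (ev i) w) p₀ := by
      rw [Finset.mul_sum]
      exact Finset.sum_congr rfl (fun i _ => hΦii i)
    rw [h2] at h1
    nlinarith [hc]
  -- Bochner identity at the maximum point
  have hBoch := bochner hF hFpos hheatJ hp₀S
  rw [← hw_def] at hBoch
  set HS := ∑ i, ∑ j, (Dd (ev i) (Dd (ev j) (uu F)) p₀) ^ 2 with hHS_def
  have hmid : ∑ j, Dd (ev j) (uu F) p₀ * Dd (ev j) w p₀ = 0 := by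
    apply Finset.sum_eq_zero
    intro j _
    rw [hwi j]
    ring
  rw [hmid] at hBoch
  -- the squared norm of the Hessian dominates the square of the trace
  have hwH : w p₀ = -∑ i, Dd (ev i) (Dd (ev i) (uu F)) p₀ := by
    rw [hw_def]
    rfl
  have hCS : (w p₀) ^ 2 ≤ (n:ℝ) * HS := by
    rw [hwH, neg_pow, hHS_def]
    simpa using cs_trace (H := fun i j => Dd (ev i) (Dd (ev j) (uu F)) p₀)
  -- time derivative of Φ
  have htΦ : Dd et Φ p₀ = w p₀ + (p₀.1 - ε) * Dd et w p₀ := by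
    rw [hDΦ p₀ hp₀S et]
    have het1 : (et : EE n).1 = (1:ℝ) := rfl
    rw [het1]
    ring
  set c := p₀.1 - ε with hc_def
  set W := w p₀ with hW_def
  have hMcW : M = c * W := rfl
  have hfin : 0 ≤ W + c * ((∑ i, Dd (ev i) (Dd (ev i) w) p₀) - 2 * HS) := by
    rw [htΦ, hBoch] at htime
    calc (0:ℝ) ≤ W + c * ((∑ i, Dd (ev i) (Dd (ev i) w) p₀) + 2 * 0 - 2 * HS) := htime
      _ = W + c * ((∑ i, Dd (ev i) (Dd (ev i) w) p₀) - 2 * HS) := by ring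
  have hkey : 0 ≤ W - 2 * c * HS := by nlinarith [mul_nonpos_of_nonneg_of_nonpos hc.le hΔw]
  -- final contradiction
  have h2M : (0:ℝ) < 2 * M - n := by linarith
  nlinarith [mul_pos hM0 h2M, mul_nonneg (mul_nonneg hn'.le hc.le) hkey,
    mul_le_mul_of_nonneg_left hCS (le_of_lt (mul_pos hc hc)), sq_nonneg W, sq_nonneg c]



lemma ww_le {F : EE n → ℝ} (hn : 1 ≤ n) (hF : Sm F) (hFpos : ∀ p ∈ S n, 0 < F p)
    (hheatJ : ∀ p ∈ S n, Dd et F p = ∑ i, Dd (ev i) (Dd (ev i) F) p) (hPF : Per F)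
    {t : ℝ} (ht : 0 < t) (x : Fin n → ℝ) : ww F (t, x) ≤ (n:ℝ) / (2 * t) := by
  have hn' : (0:ℝ) < n := by exact_mod_cast Nat.lt_of_lt_of_le Nat.zero_lt_one hn
  set W := ww F (t, x) with hW_def
  have hbound : t * W ≤ (n:ℝ) / 2 := by
    by_contra hcon
    push_neg at hcon
    have hW0 : 0 < W := by nlinarith
    set ε := (t * W - (n:ℝ)/2) / (2 * W) with hε_def
    have hε0 : 0 < ε := by
      apply div_pos (by linarith) (by linarith)
    have hεt : ε < t := by
      rw [hε_def, div_lt_iff₀ (by linarith)]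
      nlinarith
    have := max_bound hn hF hFpos hheatJ hPF hε0 hεt x
    rw [← hW_def] at this
    have hexp : (t - ε) * W = t * W - (t * W - (n:ℝ)/2)/2 := by
      rw [hε_def]
      field_simp
    nlinarith
  rw [le_div_iff₀ (by linarith)]
  linarith

lemma pd_sub_const {g : (Fin n → ℝ) → ℝ} (c : ℝ) (i : Fin n) (x : Fin n → ℝ) :
    pd i (fun y => g y - c) x = pd i g x := by
  unfold pd
  rw [fderiv_sub_const]

end LiYau


/-- Corollary 3.3 (Li–Yau): for a positive periodic solution of the heat equation,
with `v = −ln f − (n/2)ln(4πt)`, one has `2Δv − n/t ≤ 0`; equivalently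
`|∇f|²/f² − (∂f/∂t)/f ≤ n/(2t)`. -/
theorem li_yau_estimate
    (n : ℕ) (hn : 1 ≤ n) (f : ℝ → (Fin n → ℝ) → ℝ)
    (hsmooth : ContDiffOn ℝ (⊤ : ℕ∞) (fun p : ℝ × (Fin n → ℝ) => f p.1 p.2)
      (Set.Ioi 0 ×ˢ Set.univ))
    (hpos : ∀ t > (0:ℝ), ∀ x : Fin n → ℝ, 0 < f t x)
    (hheat : ∀ t > (0:ℝ), ∀ x : Fin n → ℝ, deriv (fun s => f s x) t = lap (f t) x)
    (hper : ∀ t > (0:ℝ), ∀ x : Fin n → ℝ, ∀ m : Fin n → ℤ,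
      f t (x + fun i => (m i : ℝ)) = f t x)
    (v : ℝ → (Fin n → ℝ) → ℝ)
    (hv : ∀ t x, v t x = -Real.log (f t x) - (n / 2 : ℝ) * Real.log (4 * π * t)) :
    ∀ t > (0:ℝ), ∀ x : Fin n → ℝ,
      2 * lap (v t) x - n / t ≤ 0 ∧
      gradSq (f t) x / (f t x) ^ 2 - deriv (fun s => f s x) t / f t x ≤ n / (2 * t) := by
  classical
  set F : LiYau.EE n → ℝ := fun p => f p.1 p.2 with hF_def
  have hF : LiYau.Sm F := fun p hp => hsmooth.contDiffAt (LiYau.isOpen_S.mem_nhds hp)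
  have hFpos : ∀ p ∈ LiYau.S n, 0 < F p := fun p hp => hpos p.1 (LiYau.mem_S.1 hp) p.2
  -- pd bridges
  have hpd1 : ∀ {t : ℝ}, 0 < t → ∀ (i : Fin n) (y : Fin n → ℝ),
      pd i (f t) y = LiYau.Dd (LiYau.ev i) F (t, y) := fun ht i y => LiYau.bridge_x hF ht y i
  have hpd2 : ∀ {t : ℝ}, 0 < t → ∀ (i : Fin n) (x : Fin n → ℝ),
      pd i (pd i (f t)) x = LiYau.Dd (LiYau.ev i) (LiYau.Dd (LiYau.ev i) F) (t, x) := by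
    intro t ht i x
    have hfe : pd i (f t) = fun y => LiYau.Dd (LiYau.ev i) F (t, y) := funext (hpd1 ht i)
    rw [hfe]
    exact LiYau.bridge_x (hF.Dd (LiYau.ev i)) ht x i
  have hder : ∀ {t : ℝ}, 0 < t → ∀ (x : Fin n → ℝ),
      deriv (fun s => f s x) t = LiYau.Dd LiYau.et F (t, x) :=
    fun ht x => LiYau.bridge_t hF ht x
  have hheatJ : ∀ p ∈ LiYau.S n, LiYau.Dd LiYau.et F p
      = ∑ i, LiYau.Dd (LiYau.ev i) (LiYau.Dd (LiYau.ev i) F) p := by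
    intro p hp
    have ht := LiYau.mem_S.1 hp
    obtain ⟨t, x⟩ := p
    rw [← hder ht x, hheat t ht x]
    unfold lap
    exact Finset.sum_congr rfl (fun i _ => hpd2 ht i x)
  have hPF : LiYau.Per F := by
    intro p hp m
    have := hper p.1 (LiYau.mem_S.1 hp) p.2 m
    show f (p.1 + 0) (p.2 + fun i => (m i : ℝ)) = f p.1 p.2
    rw [add_zero]
    exact this
  intro t ht x
  have hp : ((t, x) : LiYau.EE n) ∈ LiYau.S n := LiYau.mem_S.2 ht
  have hW := LiYau.ww_le hn hF hFpos hheatJ hPF ht x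
  constructor
  · -- first inequality : lap (v t) x = ww F (t,x)
    have hlap : lap (v t) x = LiYau.ww F (t, x) := by
      set G : LiYau.EE n → ℝ := fun q => -(LiYau.uu F q) with hG_def
      have hG : LiYau.Sm G := (LiYau.Sm_uu hF hFpos).neg
      have hvt : v t = fun y => (fun y' => G (t, y')) y - (n / 2 : ℝ) * Real.log (4 * π * t) := by
        funext y
        rw [hv t y]
        rfl
      have hpdv : ∀ (i : Fin n) (y : Fin n → ℝ),
          pd i (v t) y = LiYau.Dd (LiYau.ev i) G (t, y) := by
        intro i y
        rw [hvt, LiYau.pd_sub_const]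
        exact LiYau.bridge_x hG ht y i
      have hpdv2 : ∀ i : Fin n, pd i (pd i (v t)) x
          = -LiYau.Dd (LiYau.ev i) (LiYau.Dd (LiYau.ev i) (LiYau.uu F)) (t, x) := by
        intro i
        have hfe : pd i (v t) = fun y => LiYau.Dd (LiYau.ev i) G (t, y) := funext (hpdv i)
        rw [hfe, LiYau.bridge_x (hG.Dd (LiYau.ev i)) ht x i]
        have hGe : LiYau.Dd (LiYau.ev i) G
            = fun q => -(LiYau.Dd (LiYau.ev i) (LiYau.uu F) q) := by
          funext q
          exact LiYau.Dd_neg (LiYau.ev i)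
        rw [hGe]
        exact LiYau.Dd_neg (LiYau.ev i)
      unfold lap
      rw [Finset.sum_congr rfl (fun i _ => hpdv2 i)]
      show _ = LiYau.ww F (t, x)
      unfold LiYau.ww
      rw [← Finset.sum_neg_distrib]
    rw [hlap]
    have h2t : (n:ℝ) / (2 * t) = ((n:ℝ) / t) / 2 := by
      rw [div_div]
      ring_nf
    rw [h2t] at hW
    linarith
  · -- second inequality
    have heq : gradSq (f t) x / (f t x) ^ 2 - deriv (fun s => f s x) t / f t x
        = LiYau.ww F (t, x) := by
      have hut := LiYau.ut_eq hF hFpos hheatJ hp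
      have hFtx : f t x = F (t, x) := rfl
      have h1 : LiYau.ww F (t, x)
          = (∑ i, (LiYau.Dd (LiYau.ev i) (LiYau.uu F) (t, x)) ^ 2)
            - LiYau.Dd LiYau.et (LiYau.uu F) (t, x) := by linarith
      have h2 : ∀ i : Fin n, LiYau.Dd (LiYau.ev i) (LiYau.uu F) (t, x)
          = LiYau.Dd (LiYau.ev i) F (t, x) / F (t, x) :=
        fun i => LiYau.Dd_uu hF hFpos hp (LiYau.ev i)
      have h3 : LiYau.Dd LiYau.et (LiYau.uu F) (t, x)
          = LiYau.Dd LiYau.et F (t, x) / F (t, x) := LiYau.Dd_uu hF hFpos hp LiYau.et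
      rw [h1, h3]
      simp only [h2]
      unfold gradSq
      rw [Finset.sum_congr rfl (fun i (_ : i ∈ Finset.univ) =>
        congrArg (· ^ 2) (hpd1 ht i x)), hder ht x, hFtx]
      rw [Finset.sum_div]
      congr 1
      apply Finset.sum_congr rfl
      intro i _
      rw [div_pow]
    rw [heq]
    exact hW
end
end

section
/- Let n ≥ 1 and let f : (0,∞) × ℝⁿ → ℝ be a smooth positive solution of the heat equation ∂f/∂t = Δf that is ℤⁿ-periodic in the space variable. Let u = −ln f and F(t) = ∫_{[0,1]ⁿ} (t²|∇u(t,x)|² − 2nt) e^{−u(t,x)} dx. Then F is differentiable on (0,∞) and dF/dt = −2t² ∫_{[0,1]ⁿ} ( |∇²u − (1/t)I|² + |∇u|²/t ) e^{−u} dx, which is ≤ 0. -/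
open MeasureTheory Real

noncomputable section

namespace EntropyAux

variable {n : ℕ}

/-- Periodicity. -/
def Per (g : (Fin n → ℝ) → ℝ) : Prop :=
  ∀ (x : Fin n → ℝ) (m : Fin n → ℤ), g (x + fun i => (m i : ℝ)) = g x

lemma pd_congr {g h : (Fin n → ℝ) → ℝ} (i : Fin n) (H : g = h) (x) :
    pd i g x = pd i h x := by rw [H]

lemma pd_eq_of_hasFDerivAt {g : (Fin n → ℝ) → ℝ} {g' : (Fin n → ℝ) →L[ℝ] ℝ}
    {x : Fin n → ℝ} (h : HasFDerivAt g g' x) (i : Fin n) :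
    pd i g x = g' (Pi.single i 1) := by
  rw [pd, h.fderiv]

lemma pd_add {a b : (Fin n → ℝ) → ℝ} {x} (ha : DifferentiableAt ℝ a x)
    (hb : DifferentiableAt ℝ b x) (i : Fin n) :
    pd i (fun y => a y + b y) x = pd i a x + pd i b x := by
  simp [pd, fderiv_fun_add ha hb]

lemma pd_sub {a b : (Fin n → ℝ) → ℝ} {x} (ha : DifferentiableAt ℝ a x)
    (hb : DifferentiableAt ℝ b x) (i : Fin n) :
    pd i (fun y => a y - b y) x = pd i a x - pd i b x := by
  simp [pd, fderiv_fun_sub ha hb]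

lemma pd_neg {a : (Fin n → ℝ) → ℝ} {x} (i : Fin n) :
    pd i (fun y => -a y) x = -pd i a x := by
  simp [pd, fderiv_neg]

lemma pd_const (c : ℝ) (x) (i : Fin n) : pd i (fun _ => c) x = 0 := by
  simp [pd]

lemma pd_mul {a b : (Fin n → ℝ) → ℝ} {x} (ha : DifferentiableAt ℝ a x)
    (hb : DifferentiableAt ℝ b x) (i : Fin n) :
    pd i (fun y => a y * b y) x = pd i a x * b x + a x * pd i b x := by
  simp [pd, fderiv_fun_mul ha hb]; ring

lemma pd_sum {ι : Type*} (s : Finset ι) (A : ι → (Fin n → ℝ) → ℝ) {x}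
    (h : ∀ j ∈ s, DifferentiableAt ℝ (A j) x) (i : Fin n) :
    pd i (fun y => ∑ j ∈ s, A j y) x = ∑ j ∈ s, pd i (A j) x := by
  simp [pd, fderiv_fun_sum h]

lemma pd_inv {a : (Fin n → ℝ) → ℝ} {x} (ha : DifferentiableAt ℝ a x)
    (h0 : a x ≠ 0) (i : Fin n) :
    pd i (fun y => (a y)⁻¹) x = -pd i a x / (a x) ^ 2 := by
  have h := (hasDerivAt_inv h0).comp_hasFDerivAt x ha.hasFDerivAt
  rw [show (fun y => (a y)⁻¹) = (fun y => y⁻¹) ∘ a from rfl, pd_eq_of_hasFDerivAt h i]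
  simp [pd]; ring

lemma pd_log {a : (Fin n → ℝ) → ℝ} {x} (ha : DifferentiableAt ℝ a x)
    (h0 : a x ≠ 0) (i : Fin n) :
    pd i (fun y => Real.log (a y)) x = pd i a x / a x := by
  have h := (Real.hasDerivAt_log h0).comp_hasFDerivAt x ha.hasFDerivAt
  rw [show (fun y => Real.log (a y)) = Real.log ∘ a from rfl, pd_eq_of_hasFDerivAt h i]
  simp [pd]; ring

/-- smoothness of pd -/
lemma contDiff_pd {g : (Fin n → ℝ) → ℝ} (h : ContDiff ℝ (⊤:ℕ∞) g) (i : Fin n) :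
    ContDiff ℝ (⊤:ℕ∞) (pd i g) := by
  have h1 : ContDiff ℝ (⊤:ℕ∞) (fderiv ℝ g) := h.fderiv_right (by simp)
  exact h1.clm_apply contDiff_const

lemma per_pd {g : (Fin n → ℝ) → ℝ} (hg : ContDiff ℝ (⊤:ℕ∞) g) (h : Per g) (i : Fin n) :
    Per (pd i g) := by
  intro x m
  have key : (fun y => g (y + fun i => (m i : ℝ))) = g := funext fun y => h y m
  have h2 : HasFDerivAt (fun y : Fin n → ℝ => y + fun i => (m i : ℝ))
      (ContinuousLinearMap.id ℝ (Fin n → ℝ)) x := by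
    simpa using (hasFDerivAt_id (𝕜 := ℝ) x).add_const (fun i => (m i : ℝ))
  have h3 : HasFDerivAt (fun y => g (y + fun i => (m i : ℝ)))
      ((fderiv ℝ g (x + fun i => (m i : ℝ))).comp (ContinuousLinearMap.id ℝ _)) x :=
    (hg.differentiable (by simp) _).hasFDerivAt.comp x h2
  have := pd_eq_of_hasFDerivAt h3 i
  rw [key] at this
  rw [pd, this]; simp [pd]

end EntropyAux
namespace EntropyAux
variable {n : ℕ}

/-- Schwarz symmetry for smooth functions. -/
lemma pd_comm {g : (Fin n → ℝ) → ℝ} (hg : ContDiff ℝ (⊤:ℕ∞) g) (i j : Fin n) (x) :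
    pd i (pd j g) x = pd j (pd i g) x := by
  have hdf : DifferentiableAt ℝ (fderiv ℝ g) x :=
    (hg.fderiv_right (m := (⊤:ℕ∞)) (by simp)).differentiable (by simp) x
  have key : ∀ v w : Fin n → ℝ,
      fderiv ℝ (fun y => fderiv ℝ g y v) x w = fderiv ℝ (fderiv ℝ g) x w v := by
    intro v w
    rw [fderiv_clm_apply hdf (differentiableAt_const v)]
    simp
  have hsymm : IsSymmSndFDerivAt ℝ g x :=
    (hg.contDiffAt).isSymmSndFDerivAt (n := ((⊤:ℕ∞) : WithTop ℕ∞)) (by simp only [minSmoothness_of_isRCLikeNormedField]; exact WithTop.coe_le_coe.mpr le_top)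
  show fderiv ℝ (fun y => fderiv ℝ g y (Pi.single j 1)) x (Pi.single i 1) = _
  rw [key, hsymm, ← key]
  rfl

/-- The open domain where everything is smooth. -/
def U (n : ℕ) : Set (ℝ × (Fin n → ℝ)) := Set.Ioi 0 ×ˢ Set.univ

lemma isOpen_U : IsOpen (U n) := isOpen_Ioi.prod isOpen_univ

lemma mem_U {t : ℝ} {x : Fin n → ℝ} (ht : 0 < t) : (t, x) ∈ U n :=
  ⟨ht, Set.mem_univ _⟩

/-- Jointly smooth on U. -/
def JSm (g : ℝ × (Fin n → ℝ) → ℝ) : Prop := ContDiffOn ℝ (⊤:ℕ∞) g (U n)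

/-- joint directional derivative -/
def PD (v : ℝ × (Fin n → ℝ)) (g : ℝ × (Fin n → ℝ) → ℝ) (p : ℝ × (Fin n → ℝ)) : ℝ :=
  fderiv ℝ g p v

def Pt (g : ℝ × (Fin n → ℝ) → ℝ) : ℝ × (Fin n → ℝ) → ℝ := PD (1, 0) g
def Px (i : Fin n) (g : ℝ × (Fin n → ℝ) → ℝ) : ℝ × (Fin n → ℝ) → ℝ := PD (0, Pi.single i 1) g

lemma JSm.pD {g : ℝ × (Fin n → ℝ) → ℝ} (hg : JSm g) (v : ℝ × (Fin n → ℝ)) : JSm (PD v g) := by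
  have h1 : ContDiffOn ℝ (⊤:ℕ∞) (fderiv ℝ g) (U n) :=
    hg.fderiv_of_isOpen isOpen_U (by simp)
  exact h1.clm_apply contDiffOn_const

lemma JSm.pt {g : ℝ × (Fin n → ℝ) → ℝ} (hg : JSm g) : JSm (Pt g) := hg.pD _
lemma JSm.px {g : ℝ × (Fin n → ℝ) → ℝ} (hg : JSm g) (i : Fin n) : JSm (Px i g) := hg.pD _

lemma JSm.differentiableAt {g : ℝ × (Fin n → ℝ) → ℝ} (hg : JSm g)
    {p : ℝ × (Fin n → ℝ)} (hp : p ∈ U n) : DifferentiableAt ℝ g p :=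
  (hg.contDiffAt (isOpen_U.mem_nhds hp)).differentiableAt (by simp)

lemma JSm.contOn {g : ℝ × (Fin n → ℝ) → ℝ} (hg : JSm g) : ContinuousOn g (U n) :=
  ContDiffOn.continuousOn hg

/-- joint Schwarz symmetry -/
lemma pD_comm {g : ℝ × (Fin n → ℝ) → ℝ} (hg : JSm g) (v w : ℝ × (Fin n → ℝ))
    {p : ℝ × (Fin n → ℝ)} (hp : p ∈ U n) : PD v (PD w g) p = PD w (PD v g) p := by
  have hdf : DifferentiableAt ℝ (fderiv ℝ g) p :=
    ((hg.fderiv_of_isOpen isOpen_U (m := (⊤:ℕ∞)) (by simp)).contDiffAt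
      (isOpen_U.mem_nhds hp)).differentiableAt (by simp)
  have key : ∀ v w : ℝ × (Fin n → ℝ),
      fderiv ℝ (fun q => fderiv ℝ g q v) p w = fderiv ℝ (fderiv ℝ g) p w v := by
    intro v w
    rw [fderiv_clm_apply hdf (differentiableAt_const v)]
    simp
  have hsymm : IsSymmSndFDerivAt ℝ g p :=
    (hg.contDiffAt (isOpen_U.mem_nhds hp)).isSymmSndFDerivAt
      (n := ((⊤:ℕ∞) : WithTop ℕ∞)) (by simp only [minSmoothness_of_isRCLikeNormedField]; exact WithTop.coe_le_coe.mpr le_top)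
  show fderiv ℝ (fun q => fderiv ℝ g q w) p v = fderiv ℝ (fun q => fderiv ℝ g q v) p w
  rw [key, key, hsymm]

/-- spatial slice is smooth -/
lemma JSm.slice {g : ℝ × (Fin n → ℝ) → ℝ} (hg : JSm g) {t : ℝ} (ht : 0 < t) :
    ContDiff ℝ (⊤:ℕ∞) (fun x => g (t, x)) := by
  rw [← contDiffOn_univ]
  exact hg.comp ((contDiff_const.prodMk contDiff_id).contDiffOn)
    (fun x _ => mem_U ht)

/-- spatial partial derivative of slice -/
lemma pd_slice {g : ℝ × (Fin n → ℝ) → ℝ} (hg : JSm g) {t : ℝ} (ht : 0 < t)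
    (i : Fin n) (x : Fin n → ℝ) :
    pd i (fun y => g (t, y)) x = Px i g (t, x) := by
  have hL : HasFDerivAt (fun y : Fin n → ℝ => (t, y))
      ((0 : (Fin n → ℝ) →L[ℝ] ℝ).prod (ContinuousLinearMap.id ℝ _)) x :=
    (hasFDerivAt_const t x).prodMk (hasFDerivAt_id x)
  have h := (hg.differentiableAt (mem_U ht)).hasFDerivAt.comp x hL
  rw [show (fun y => g (t, y)) = g ∘ Prod.mk t from rfl, pd_eq_of_hasFDerivAt h i]
  rfl

/-- time derivative of slice -/
lemma hasDerivAt_slice {g : ℝ × (Fin n → ℝ) → ℝ} (hg : JSm g) {t : ℝ} (ht : 0 < t)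
    (x : Fin n → ℝ) :
    HasDerivAt (fun s => g (s, x)) (Pt g (t, x)) t := by
  have hc : HasDerivAt (fun s : ℝ => (s, x)) ((1:ℝ), (0 : Fin n → ℝ)) t :=
    (hasDerivAt_id t).prodMk (hasDerivAt_const t x)
  exact (hg.differentiableAt (mem_U ht)).hasFDerivAt.comp_hasDerivAt t hc

/-- second spatial slice -/
lemma pd_pd_slice {g : ℝ × (Fin n → ℝ) → ℝ} (hg : JSm g) {t : ℝ} (ht : 0 < t)
    (i j : Fin n) (x : Fin n → ℝ) :
    pd i (pd j (fun y => g (t, y))) x = Px i (Px j g) (t, x) := by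
  have h1 : pd j (fun y => g (t, y)) = fun y => Px j g (t, y) :=
    funext fun y => pd_slice hg ht j y
  rw [h1, pd_slice (hg.px j) ht i x]


/-! ### Divergence theorem on the unit cube for periodic functions -/

lemma integrableOn_cube {g : (Fin n → ℝ) → ℝ} (hc : Continuous g) :
    IntegrableOn g (Set.Icc (0 : Fin n → ℝ) 1) volume :=
  hc.continuousOn.integrableOn_compact isCompact_Icc

lemma _root_.Continuous.integrableOn_cube' {g : (Fin n → ℝ) → ℝ} (hc : Continuous g) :
    IntegrableOn g (Set.Icc (0 : Fin n → ℝ) 1) volume :=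
  hc.continuousOn.integrableOn_compact isCompact_Icc

/-- the coordinate line through `insertNth` is affine -/
lemma insertNth_line {m : ℕ} (j : Fin (m + 1)) (y : Fin m → ℝ) (s : ℝ) :
    ((Fin.insertNth (α := fun _ : Fin (m+1) => ℝ) j) s y : Fin (m + 1) → ℝ) = (Fin.insertNth (α := fun _ : Fin (m+1) => ℝ) j) (0:ℝ) y + s • (Pi.single j 1 : Fin (m+1) → ℝ) := by
  refine funext (Fin.succAboveCases j ?_ ?_)
  · simp
  · intro k
    have hne : j.succAbove k ≠ j := Fin.succAbove_ne j k
    simp [Pi.single_apply, hne]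

lemma hasDerivAt_insertNth_line {m : ℕ} {φ : (Fin (m+1) → ℝ) → ℝ}
    (hφ : ContDiff ℝ (⊤:ℕ∞) φ) (j : Fin (m + 1)) (y : Fin m → ℝ) (s : ℝ) :
    HasDerivAt (fun r => φ ((Fin.insertNth (α := fun _ : Fin (m+1) => ℝ) j) r y)) (pd j φ ((Fin.insertNth (α := fun _ : Fin (m+1) => ℝ) j) s y)) s := by
  have hc : HasDerivAt (fun r : ℝ => (Fin.insertNth (α := fun _ : Fin (m+1) => ℝ) j) r y) (Pi.single j 1) s := by
    have : (fun r : ℝ => (Fin.insertNth (α := fun _ : Fin (m+1) => ℝ) j) r y)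
        = fun r : ℝ => (Fin.insertNth (α := fun _ : Fin (m+1) => ℝ) j) 0 y + r • (Pi.single j 1 : Fin (m+1) → ℝ) :=
      funext fun r => insertNth_line j y r
    rw [this]
    simpa using (((hasDerivAt_id s).smul_const (Pi.single j (1:ℝ))).const_add
      ((Fin.insertNth (α := fun _ : Fin (m+1) => ℝ) j) 0 y))
  exact (hφ.differentiable (by simp) _).hasFDerivAt.comp_hasDerivAt s hc

/-- Divergence theorem: the integral of a partial derivative of a smooth
periodic function over the unit cube vanishes. -/
lemma integral_pd_eq_zero {m : ℕ} {φ : (Fin (m+1) → ℝ) → ℝ}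
    (hφ : ContDiff ℝ (⊤:ℕ∞) φ) (hper : Per φ) (j : Fin (m + 1)) :
    ∫ x in Set.Icc (0 : Fin (m+1) → ℝ) 1, pd j φ x = 0 := by
  classical
  set e := MeasurableEquiv.piFinSuccAbove (fun _ : Fin (m+1) => ℝ) j with he
  have hmp : MeasurePreserving e.symm volume volume :=
    (volume_preserving_piFinSuccAbove (fun _ : Fin (m+1) => ℝ) j).symm e
  have hsymm_apply : ∀ p : ℝ × (Fin m → ℝ), e.symm p = (Fin.insertNth (α := fun _ : Fin (m+1) => ℝ) j) p.1 p.2 := by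
    intro p
    rw [MeasurableEquiv.piFinSuccAbove_symm_apply]
    rfl
  have hpre : e.symm ⁻¹' (Set.Icc (0 : Fin (m+1) → ℝ) 1)
      = Set.Icc (0:ℝ) 1 ×ˢ Set.Icc (0 : Fin m → ℝ) 1 := by
    ext p
    simp only [Set.mem_preimage, hsymm_apply, Fin.insertNth_mem_Icc, Set.mem_prod]
    simp [Pi.le_def]
  have hkey := hmp.setIntegral_preimage_emb e.symm.measurableEmbedding
    (pd j φ) (Set.Icc (0 : Fin (m+1) → ℝ) 1)
  rw [← hkey, hpre]
  have hpd_cont : Continuous (pd j φ) := (contDiff_pd hφ j).continuous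
  have hins_cont : Continuous (fun p : ℝ × (Fin m → ℝ) => (Fin.insertNth (α := fun _ : Fin (m+1) => ℝ) j) p.1 p.2) := by
    apply continuous_pi
    intro i
    refine Fin.succAboveCases j ?_ ?_ i
    · simpa using continuous_fst
    · intro k
      simp only [Fin.insertNth_apply_succAbove]; exact (continuous_apply k).comp continuous_snd
  have hcont2 : Continuous fun p : ℝ × (Fin m → ℝ) => pd j φ (e.symm p) := by
    have : (fun p : ℝ × (Fin m → ℝ) => pd j φ (e.symm p))
        = fun p => pd j φ ((Fin.insertNth (α := fun _ : Fin (m+1) => ℝ) j) p.1 p.2) := funext fun p => by rw [hsymm_apply]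
    rw [this]; exact hpd_cont.comp hins_cont
  have hint : IntegrableOn (fun p : ℝ × (Fin m → ℝ) => pd j φ (e.symm p))
      (Set.Icc (0:ℝ) 1 ×ˢ Set.Icc (0 : Fin m → ℝ) 1) volume :=
    hcont2.continuousOn.integrableOn_compact (isCompact_Icc.prod isCompact_Icc)
  have hvol : (volume : Measure (ℝ × (Fin m → ℝ)))
      = (volume : Measure ℝ).prod (volume : Measure (Fin m → ℝ)) :=
    Measure.volume_eq_prod ℝ (Fin m → ℝ)
  have hint' : Integrable (fun p : ℝ × (Fin m → ℝ) => pd j φ (e.symm p))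
      (((volume : Measure ℝ).restrict (Set.Icc 0 1)).prod
        ((volume : Measure (Fin m → ℝ)).restrict (Set.Icc 0 1))) := by
    rwa [Measure.prod_restrict, ← hvol]
  have step1 : ∫ p in Set.Icc (0:ℝ) 1 ×ˢ Set.Icc (0 : Fin m → ℝ) 1,
        pd j φ (e.symm p) ∂(volume : Measure (ℝ × (Fin m → ℝ)))
      = ∫ s in Set.Icc (0:ℝ) 1, ∫ y in Set.Icc (0 : Fin m → ℝ) 1,
          pd j φ (e.symm (s, y)) := by
    rw [hvol, ← Measure.prod_restrict]
    exact MeasureTheory.integral_prod _ hint'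
  have step2 : ∫ s in Set.Icc (0:ℝ) 1, ∫ y in Set.Icc (0 : Fin m → ℝ) 1,
          pd j φ (e.symm (s, y))
      = ∫ y in Set.Icc (0 : Fin m → ℝ) 1, ∫ s in Set.Icc (0:ℝ) 1,
          pd j φ (e.symm (s, y)) :=
    MeasureTheory.integral_integral_swap hint'
  have inner_zero : ∀ y : Fin m → ℝ,
      ∫ s in Set.Icc (0:ℝ) 1, pd j φ (e.symm (s, y)) = 0 := by
    intro y
    have hrw : (fun s : ℝ => pd j φ (e.symm (s, y)))
        = fun s => pd j φ ((Fin.insertNth (α := fun _ : Fin (m+1) => ℝ) j) s y) := funext fun s => by rw [hsymm_apply]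
    rw [hrw, MeasureTheory.integral_Icc_eq_integral_Ioc,
      ← intervalIntegral.integral_of_le (by norm_num : (0:ℝ) ≤ 1)]
    have hftc := intervalIntegral.integral_eq_sub_of_hasDerivAt
      (f := fun r => φ ((Fin.insertNth (α := fun _ : Fin (m+1) => ℝ) j) r y)) (f' := fun r => pd j φ ((Fin.insertNth (α := fun _ : Fin (m+1) => ℝ) j) r y))
      (fun s _ => hasDerivAt_insertNth_line hφ j y s)
      ((hpd_cont.comp (hins_cont.comp (Continuous.prodMk continuous_id
        continuous_const))).intervalIntegrable 0 1)
    have hone : (Fin.insertNth (α := fun _ : Fin (m+1) => ℝ) j) (1:ℝ) y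
        = (Fin.insertNth (α := fun _ : Fin (m+1) => ℝ) j) 0 y + fun i => ((Pi.single j 1 : Fin (m+1) → ℤ) i : ℝ) := by
      rw [insertNth_line j y 1]
      congr 1
      funext i
      by_cases hij : i = j
      · subst hij; simp
      · simp [Pi.single_apply, hij]
    have hval : φ ((Fin.insertNth (α := fun _ : Fin (m+1) => ℝ) j) (1:ℝ) y)
        = φ ((Fin.insertNth (α := fun _ : Fin (m+1) => ℝ) j) 0 y) := by
      rw [hone]; exact hper _ _
    rw [hftc]
    simp [hval]
  rw [step1, step2]
  simp only [inner_zero]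
  simp


/-! ### Periodicity closure -/

lemma Per.comp2 {a b : (Fin n → ℝ) → ℝ} (ha : Per a) (hb : Per b)
    (Op : ℝ → ℝ → ℝ) : Per (fun y => Op (a y) (b y)) := by
  intro x m; simp only [ha x m, hb x m]

lemma Per.comp1 {a : (Fin n → ℝ) → ℝ} (ha : Per a) (Op : ℝ → ℝ) :
    Per (fun y => Op (a y)) := by
  intro x m; simp only [ha x m]

lemma Per.sum {ι : Type*} (s : Finset ι) (A : ι → (Fin n → ℝ) → ℝ)
    (h : ∀ i ∈ s, Per (A i)) : Per (fun y => ∑ i ∈ s, A i y) := by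
  intro x m
  exact Finset.sum_congr rfl fun i hi => h i hi x m

/-! ### Integration by parts on the cube -/

lemma integral_ibp {m : ℕ} {a b : (Fin (m+1) → ℝ) → ℝ}
    (ha : ContDiff ℝ (⊤:ℕ∞) a) (hb : ContDiff ℝ (⊤:ℕ∞) b)
    (hpa : Per a) (hpb : Per b) (j : Fin (m+1)) :
    ∫ x in Set.Icc (0 : Fin (m+1) → ℝ) 1, pd j a x * b x
      = - ∫ x in Set.Icc (0 : Fin (m+1) → ℝ) 1, a x * pd j b x := by
  have hab : ContDiff ℝ (⊤:ℕ∞) (fun y => a y * b y) := ha.mul hb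
  have hpab : Per (fun y => a y * b y) := hpa.comp2 hpb (· * ·)
  have hz := integral_pd_eq_zero hab hpab j
  have hrw : pd j (fun y => a y * b y)
      = fun x => pd j a x * b x + a x * pd j b x :=
    funext fun x => pd_mul (ha.differentiable (by simp) x)
      (hb.differentiable (by simp) x) j
  rw [hrw] at hz
  have h1 : IntegrableOn (fun x => pd j a x * b x)
      (Set.Icc (0 : Fin (m+1) → ℝ) 1) volume :=
    integrableOn_cube (((contDiff_pd ha j).continuous).mul hb.continuous)
  have h2 : IntegrableOn (fun x => a x * pd j b x)
      (Set.Icc (0 : Fin (m+1) → ℝ) 1) volume :=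
    integrableOn_cube ((ha.continuous).mul (contDiff_pd hb j).continuous)
  rw [MeasureTheory.integral_add h1 h2] at hz
  linarith

/-! ### Differentiation under the integral sign -/

lemma hasDerivAt_integral_cube {g : ℝ × (Fin n → ℝ) → ℝ} (hg : JSm g)
    {t : ℝ} (ht : 0 < t) :
    HasDerivAt (fun s => ∫ x in Set.Icc (0 : Fin n → ℝ) 1, g (s, x))
      (∫ x in Set.Icc (0 : Fin n → ℝ) 1, Pt g (t, x)) t := by
  have hKc : IsCompact ((Set.Icc (t/2) (3*t/2)) ×ˢ Set.Icc (0 : Fin n → ℝ) 1) :=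
    isCompact_Icc.prod isCompact_Icc
  have hKU : (Set.Icc (t/2) (3*t/2)) ×ˢ Set.Icc (0 : Fin n → ℝ) 1 ⊆ U n := by
    rintro ⟨s, x⟩ ⟨hs, -⟩
    exact mem_U (by simp at hs ⊢; linarith [hs.1])
  obtain ⟨C, hC⟩ := hKc.exists_bound_of_continuousOn
    ((hg.pt.contOn).mono hKU)
  have hball : ∀ s ∈ Metric.ball t (t/2), 0 < s ∧ s ∈ Set.Icc (t/2) (3*t/2) := by
    intro s hs
    rw [Metric.mem_ball, Real.dist_eq, abs_lt] at hs
    constructor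
    · linarith [hs.1]
    · constructor <;> [linarith [hs.1]; linarith [hs.2]]
  have meas_cube : MeasurableSet (Set.Icc (0 : Fin n → ℝ) 1) := measurableSet_Icc
  have key := hasDerivAt_integral_of_dominated_loc_of_deriv_le
    (F := fun s x => g (s, x)) (F' := fun s x => Pt g (s, x))
    (μ := volume.restrict (Set.Icc (0 : Fin n → ℝ) 1)) (x₀ := t)
    (bound := fun _ => C) (Metric.ball_mem_nhds t (half_pos ht))
    ?_ ?_ ?_ ?_ ?_ ?_
  · exact key.2
  · filter_upwards [eventually_mem_nhds_iff.mpr (isOpen_Ioi.mem_nhds ht)] with s hs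
    exact ((hg.slice (Set.mem_Ioi.mp (mem_of_mem_nhds hs))).continuous).aestronglyMeasurable
  · exact integrableOn_cube ((hg.slice ht).continuous)
  · exact ((hg.pt.slice ht).continuous).aestronglyMeasurable
  · filter_upwards [MeasureTheory.self_mem_ae_restrict meas_cube] with x hx s hs
    exact hC (s, x) ⟨(hball s hs).2, hx⟩
  · exact integrableOn_cube continuous_const
  · refine Filter.Eventually.of_forall fun x => fun s hs => ?_
    exact hasDerivAt_slice hg (hball s hs).1 x


/-! ### more pd rules -/

lemma pd_div {a b : (Fin n → ℝ) → ℝ} {x} (ha : DifferentiableAt ℝ a x)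
    (hb : DifferentiableAt ℝ b x) (h0 : b x ≠ 0) (i : Fin n) :
    pd i (fun y => a y / b y) x = (pd i a x * b x - a x * pd i b x) / (b x) ^ 2 := by
  have h1 : (fun y => a y / b y) = fun y => a y * (b y)⁻¹ := by
    funext y; rw [div_eq_mul_inv]
  rw [h1, pd_mul (b := fun y => (b y)⁻¹) ha (hb.inv h0), pd_inv hb h0]
  field_simp
  ring

lemma pd_sq {a : (Fin n → ℝ) → ℝ} {x} (ha : DifferentiableAt ℝ a x) (i : Fin n) :
    pd i (fun y => (a y) ^ 2) x = 2 * a x * pd i a x := by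
  have h1 : (fun y => (a y) ^ 2) = fun y => a y * a y := by
    funext y; ring
  rw [h1, pd_mul ha ha]
  ring

lemma contDiff_pd2 {g : (Fin n → ℝ) → ℝ} (h : ContDiff ℝ (⊤:ℕ∞) g) (i j : Fin n) :
    ContDiff ℝ (⊤:ℕ∞) (pd i (pd j g)) := contDiff_pd (contDiff_pd h j) i

lemma diffAt {g : (Fin n → ℝ) → ℝ} (h : ContDiff ℝ (⊤:ℕ∞) g) (x : Fin n → ℝ) :
    DifferentiableAt ℝ g x := h.differentiable (by simp) x

/-- derivative of gradSq -/
lemma pd_gradSq {w : (Fin n → ℝ) → ℝ} (hw : ContDiff ℝ (⊤:ℕ∞) w) (j : Fin n) (x) :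
    pd j (gradSq w) x = ∑ i, 2 * pd i w x * pd i (pd j w) x := by
  have h1 : gradSq w = fun y => ∑ i, (pd i w y) ^ 2 := rfl
  rw [h1, pd_sum Finset.univ _ (fun i _ => ((contDiff_pd hw i).pow 2).differentiable
    (by simp) x) j]
  refine Finset.sum_congr rfl fun i _ => ?_
  rw [pd_sq (diffAt (contDiff_pd hw i) x) j, pd_comm hw j i x]

/-- derivative of lap -/
lemma pd_lap {w : (Fin n → ℝ) → ℝ} (hw : ContDiff ℝ (⊤:ℕ∞) w) (i : Fin n) (x) :
    pd i (lap w) x = ∑ j, pd i (pd j (pd j w)) x := by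
  have h1 : lap w = fun y => ∑ j, pd j (pd j w) y := rfl
  rw [h1, pd_sum Finset.univ _ (fun j _ => diffAt (contDiff_pd2 hw j j) x) i]

lemma contDiff_gradSq {w : (Fin n → ℝ) → ℝ} (hw : ContDiff ℝ (⊤:ℕ∞) w) :
    ContDiff ℝ (⊤:ℕ∞) (gradSq w) := by
  have : gradSq w = fun y => ∑ i, (pd i w y) ^ 2 := rfl
  rw [this]
  exact ContDiff.sum fun i _ => (contDiff_pd hw i).pow 2

lemma contDiff_lap {w : (Fin n → ℝ) → ℝ} (hw : ContDiff ℝ (⊤:ℕ∞) w) :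
    ContDiff ℝ (⊤:ℕ∞) (lap w) := by
  have : lap w = fun y => ∑ i, pd i (pd i w) y := rfl
  rw [this]
  exact ContDiff.sum fun i _ => contDiff_pd2 hw i i

lemma per_gradSq {w : (Fin n → ℝ) → ℝ} (hw : ContDiff ℝ (⊤:ℕ∞) w) (hp : Per w) :
    Per (gradSq w) := by
  have : gradSq w = fun y => ∑ i, (pd i w y) ^ 2 := rfl
  rw [this]
  exact Per.sum _ _ fun i _ => (per_pd hw hp i).comp1 (· ^ 2)

lemma per_lap {w : (Fin n → ℝ) → ℝ} (hw : ContDiff ℝ (⊤:ℕ∞) w) (hp : Per w) :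
    Per (lap w) := by
  have : lap w = fun y => ∑ i, pd i (pd i w) y := rfl
  rw [this]
  exact Per.sum _ _ fun i _ => per_pd (contDiff_pd hw i) (per_pd hw hp i) i


/-! ### the two integration-by-parts identities -/

lemma integral_double_sum {m : ℕ} {ι : Type*} [Fintype ι]
    (F : ι → ι → (Fin (m+1) → ℝ) → ℝ) (hF : ∀ i j, Continuous (F i j)) :
    ∫ x in Set.Icc (0 : Fin (m+1) → ℝ) 1, ∑ i, ∑ j, F i j x
      = ∑ i, ∑ j, ∫ x in Set.Icc (0 : Fin (m+1) → ℝ) 1, F i j x := by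
  rw [MeasureTheory.integral_finset_sum _
    (fun i _ => integrableOn_cube (continuous_finset_sum _ fun j _ => hF i j))]
  exact Finset.sum_congr rfl fun i _ =>
    MeasureTheory.integral_finset_sum _ (fun j _ => integrableOn_cube (hF i j))

/-- The first IBP target. -/
def Big {m : ℕ} (w : (Fin (m+1) → ℝ) → ℝ) (x : Fin (m+1) → ℝ) : ℝ :=
  ∑ i, ∑ j, pd i (pd j w) x *
    ((pd i (pd j w) x * w x - pd i w x * pd j w x) / (w x) ^ 2)

/-- The second IBP target. -/
def Big2 {m : ℕ} (w : (Fin (m+1) → ℝ) → ℝ) (x : Fin (m+1) → ℝ) : ℝ :=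
  ∑ j, pd j w x *
    (((∑ i, 2 * pd i w x * pd i (pd j w) x) * (w x) ^ 2
        - gradSq w x * (2 * w x * pd j w x)) / ((w x) ^ 2) ^ 2)

section core

variable {m : ℕ} {w : (Fin (m+1) → ℝ) → ℝ}

lemma ibp1 (hw : ContDiff ℝ (⊤:ℕ∞) w) (hper : Per w) (hpos : ∀ x, 0 < w x) :
    ∫ x in Set.Icc (0 : Fin (m+1) → ℝ) 1,
        (∑ i, ∑ j, pd i w x * pd i (pd j (pd j w)) x) / w x
      = - ∫ x in Set.Icc (0 : Fin (m+1) → ℝ) 1, Big w x := by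
  have hne : ∀ x, w x ≠ 0 := fun x => (hpos x).ne'
  have hcw := hw.continuous
  have hc1 : ∀ i : Fin (m+1), Continuous (pd i w) :=
    fun i => (contDiff_pd hw i).continuous
  have hc2 : ∀ i j : Fin (m+1), Continuous (pd i (pd j w)) :=
    fun i j => (contDiff_pd2 hw i j).continuous
  have hc3 : ∀ i j k : Fin (m+1), Continuous (pd i (pd j (pd k w))) :=
    fun i j k => (contDiff_pd (contDiff_pd2 hw j k) i).continuous
  -- step 1: move the sums out
  have hpt : (fun x => (∑ i, ∑ j, pd i w x * pd i (pd j (pd j w)) x) / w x)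
      = fun x => ∑ i, ∑ j, pd i w x * pd i (pd j (pd j w)) x / w x := by
    funext x
    rw [Finset.sum_div]
    exact Finset.sum_congr rfl fun i _ => by rw [Finset.sum_div]
  rw [hpt]
  rw [integral_double_sum (fun i j => fun x => pd i w x * pd i (pd j (pd j w)) x / w x)
    (fun i j => ((hc1 i).mul (hc3 i j j)).div hcw hne)]
  -- step 2: termwise IBP
  have hterm : ∀ i j : Fin (m+1),
      ∫ x in Set.Icc (0 : Fin (m+1) → ℝ) 1, pd i w x * pd i (pd j (pd j w)) x / w x
      = - ∫ x in Set.Icc (0 : Fin (m+1) → ℝ) 1, pd i (pd j w) x *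
          ((pd i (pd j w) x * w x - pd i w x * pd j w x) / (w x) ^ 2) := by
    intro i j
    have hb : ContDiff ℝ (⊤:ℕ∞) (fun x => pd i w x / w x) :=
      (contDiff_pd hw i).div hw hne
    have hbp : Per (fun x => pd i w x / w x) :=
      (per_pd hw hper i).comp2 hper (· / ·)
    have e1 : (fun x => pd i w x * pd i (pd j (pd j w)) x / w x)
        = fun x => pd j (pd i (pd j w)) x * (pd i w x / w x) := by
      funext x
      rw [pd_comm (contDiff_pd hw j) i j x]
      ring
    rw [e1, integral_ibp (contDiff_pd2 hw i j) hb
      (per_pd (contDiff_pd hw j) (per_pd hw hper j) i) hbp j]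
    congr 1
    refine MeasureTheory.setIntegral_congr_fun measurableSet_Icc fun x _ => ?_
    rw [pd_div (diffAt (contDiff_pd hw i) x) (diffAt hw x) (hne x) j,
      pd_comm hw j i x]
  have := Finset.sum_congr rfl (fun i (_ : i ∈ Finset.univ) =>
    Finset.sum_congr rfl fun j (_ : j ∈ Finset.univ) => hterm i j)
  rw [this]
  rw [show (Big w) = fun x => ∑ i, ∑ j, pd i (pd j w) x *
      ((pd i (pd j w) x * w x - pd i w x * pd j w x) / (w x) ^ 2) from rfl]
  rw [integral_double_sum (fun i j => fun x => pd i (pd j w) x *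
      ((pd i (pd j w) x * w x - pd i w x * pd j w x) / (w x) ^ 2))
    (fun i j => (hc2 i j).mul
    ((((hc2 i j).mul hcw).sub ((hc1 i).mul (hc1 j))).div (hcw.pow 2)
      (fun x => pow_ne_zero 2 (hne x))))]
  rw [← Finset.sum_neg_distrib]
  exact Finset.sum_congr rfl fun i _ => by rw [← Finset.sum_neg_distrib]

lemma ibp2 (hw : ContDiff ℝ (⊤:ℕ∞) w) (hper : Per w) (hpos : ∀ x, 0 < w x) :
    ∫ x in Set.Icc (0 : Fin (m+1) → ℝ) 1, gradSq w x * lap w x / (w x) ^ 2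
      = - ∫ x in Set.Icc (0 : Fin (m+1) → ℝ) 1, Big2 w x := by
  have hne : ∀ x, w x ≠ 0 := fun x => (hpos x).ne'
  have hne2 : ∀ x, (w x)^2 ≠ 0 := fun x => pow_ne_zero 2 (hne x)
  have hcw := hw.continuous
  have hc1 : ∀ i : Fin (m+1), Continuous (pd i w) :=
    fun i => (contDiff_pd hw i).continuous
  have hc2 : ∀ i j : Fin (m+1), Continuous (pd i (pd j w)) :=
    fun i j => (contDiff_pd2 hw i j).continuous
  have hb : ContDiff ℝ (⊤:ℕ∞) (fun x => gradSq w x / (w x)^2) :=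
    (contDiff_gradSq hw).div (hw.pow 2) hne2
  have hbp : Per (fun x => gradSq w x / (w x)^2) :=
    (per_gradSq hw hper).comp2 hper (fun a b => a / b^2)
  have hpt : (fun x => gradSq w x * lap w x / (w x)^2)
      = fun x => ∑ j, pd j (pd j w) x * (gradSq w x / (w x)^2) := by
    funext x
    rw [show lap w x = ∑ j, pd j (pd j w) x from rfl, Finset.mul_sum, Finset.sum_div]
    refine Finset.sum_congr rfl fun j _ => ?_
    ring
  rw [hpt]
  rw [MeasureTheory.integral_finset_sum (f := fun j => fun x =>
      pd j (pd j w) x * (gradSq w x / (w x)^2)) Finset.univ (fun j _ => integrableOn_cube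
    ((hc2 j j).mul ((contDiff_gradSq hw).continuous.div (hcw.pow 2) hne2)))]
  have hterm : ∀ j : Fin (m+1),
      ∫ x in Set.Icc (0 : Fin (m+1) → ℝ) 1, pd j (pd j w) x * (gradSq w x / (w x)^2)
      = - ∫ x in Set.Icc (0 : Fin (m+1) → ℝ) 1, pd j w x *
          (((∑ i, 2 * pd i w x * pd i (pd j w) x) * (w x) ^ 2
            - gradSq w x * (2 * w x * pd j w x)) / ((w x) ^ 2) ^ 2) := by
    intro j
    rw [integral_ibp (contDiff_pd hw j) hb (per_pd hw hper j) hbp j]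
    congr 1
    refine MeasureTheory.setIntegral_congr_fun measurableSet_Icc fun x _ => ?_
    rw [pd_div (diffAt (contDiff_gradSq hw) x) (diffAt (hw.pow 2) x) (hne2 x) j]
    rw [pd_gradSq hw j x]
    rw [show (fun y => (w y)^2) = fun y => w y ^ 2 from rfl,
      pd_sq (diffAt hw x) j]
  rw [Finset.sum_congr rfl (fun j (_ : j ∈ Finset.univ) => hterm j)]
  rw [show (Big2 w) = fun x => ∑ j, pd j w x *
      (((∑ i, 2 * pd i w x * pd i (pd j w) x) * (w x) ^ 2
        - gradSq w x * (2 * w x * pd j w x)) / ((w x) ^ 2) ^ 2) from rfl]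
  rw [MeasureTheory.integral_finset_sum (f := fun j => fun x => pd j w x *
      (((∑ i, 2 * pd i w x * pd i (pd j w) x) * (w x) ^ 2
        - gradSq w x * (2 * w x * pd j w x)) / ((w x) ^ 2) ^ 2)) Finset.univ
    (fun j _ => integrableOn_cube
    ((hc1 j).mul ((((continuous_finset_sum _ (fun i _ => (continuous_const.mul
      (hc1 i)).mul (hc2 i j))).mul (hcw.pow 2)).sub
      (((contDiff_gradSq hw).continuous).mul ((continuous_const.mul hcw).mul
        (hc1 j)))).div ((hcw.pow 2).pow 2)
      (fun x => pow_ne_zero 2 (hne2 x)))))]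
  rw [← Finset.sum_neg_distrib]

end core


/-! ### pointwise algebraic identity -/

lemma double_sum_add {k : ℕ} (f g : Fin k → Fin k → ℝ) :
    ((∑ i, ∑ j, f i j) + ∑ i, ∑ j, g i j) = ∑ i, ∑ j, (f i j + g i j) := by
  rw [← Finset.sum_add_distrib]
  exact Finset.sum_congr rfl fun i _ => by rw [← Finset.sum_add_distrib]

lemma double_sum_sub {k : ℕ} (f g : Fin k → Fin k → ℝ) :
    ((∑ i, ∑ j, f i j) - ∑ i, ∑ j, g i j) = ∑ i, ∑ j, (f i j - g i j) := by
  rw [← Finset.sum_sub_distrib]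
  exact Finset.sum_congr rfl fun i _ => by rw [← Finset.sum_sub_distrib]

lemma diag_sum {k : ℕ} (c : Fin k → ℝ) :
    (∑ i, c i) = ∑ i, ∑ j, (if i = j then c i else 0) := by
  refine Finset.sum_congr rfl fun i _ => ?_
  rw [Finset.sum_ite_eq Finset.univ i (fun _ => c i)]
  simp

lemma PW_abstract {k : ℕ} (A : Fin k → Fin k → ℝ) (b : Fin k → ℝ) {W t : ℝ}
    (hW : W ≠ 0) (ht : t ≠ 0) :
    ((∑ i, ∑ j, (-(A i j)/W + b i * b j/W^2 - (1/t)*(if i = j then (1:ℝ) else 0))^2)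
        + ((∑ i, (b i)^2)/W^2)/t) * W
      = (∑ i, ∑ j, A i j * ((A i j * W - b i * b j)/W^2))
        - (∑ j, b j * (((∑ i, 2*b i*A i j)*W^2 - (∑ i, (b i)^2)*(2*W*b j))/(W^2)^2))/2
        - (1/t)*((∑ i, (b i)^2)/W) + (2/t)*(∑ i, A i i) + ((k:ℝ)/t^2)*W := by
  have hW2 : W^2 ≠ 0 := pow_ne_zero 2 hW
  -- LHS as a single double sum
  have lhs_eq : ((∑ i, ∑ j, (-(A i j)/W + b i * b j/W^2
        - (1/t)*(if i = j then (1:ℝ) else 0))^2) + ((∑ i, (b i)^2)/W^2)/t) * W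
      = ∑ i, ∑ j, ((-(A i j)/W + b i * b j/W^2
          - (1/t)*(if i = j then (1:ℝ) else 0))^2 * W
          + (if i = j then (b i)^2*W/(W^2*t) else 0)) := by
    rw [add_mul, Finset.sum_mul]
    have h1 : (∑ i, (b i)^2)/W^2/t * W = ∑ i, (b i)^2*W/(W^2*t) := by
      rw [div_div, Finset.sum_div, Finset.sum_mul]
      exact Finset.sum_congr rfl fun i _ => by ring
    rw [h1, diag_sum (fun i => (b i)^2*W/(W^2*t)), ← double_sum_add]
    congr 1
    exact Finset.sum_congr rfl fun i _ => by rw [Finset.sum_mul]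
  -- RHS as a single double sum
  have big2_eq : (∑ j, b j * (((∑ i, 2*b i*A i j)*W^2
        - (∑ i, (b i)^2)*(2*W*b j))/(W^2)^2))
      = ∑ i, ∑ j, b j * ((2*b i*A i j*W^2 - (b i)^2*(2*W*b j))/(W^2)^2) := by
    rw [Finset.sum_comm]
    refine Finset.sum_congr rfl fun j _ => ?_
    rw [Finset.sum_mul, Finset.sum_mul, ← Finset.sum_sub_distrib, Finset.sum_div,
      Finset.mul_sum]
  have diag1 : (1/t)*((∑ i, (b i)^2)/W) = ∑ i, ∑ j, (if i = j then (b i)^2/(W*t) else 0) := by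
    rw [← diag_sum (fun i => (b i)^2/(W*t)), Finset.sum_div, Finset.mul_sum]
    exact Finset.sum_congr rfl fun i _ => by ring
  have diag2 : (2/t)*(∑ i, A i i) = ∑ i, ∑ j, (if i = j then 2*A i i/t else 0) := by
    rw [← diag_sum (fun i => 2*A i i/t), Finset.mul_sum]
    exact Finset.sum_congr rfl fun i _ => by ring
  have diag3 : ((k:ℝ)/t^2)*W = ∑ i : Fin k, ∑ j : Fin k, (if i = j then W/t^2 else 0) := by
    rw [← diag_sum (fun _ : Fin k => W/t^2), Finset.sum_const]
    simp [Finset.card_univ]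
    ring
  rw [lhs_eq, big2_eq, diag1, diag2, diag3]
  have half : (∑ i, ∑ j, b j * ((2*b i*A i j*W^2 - (b i)^2*(2*W*b j))/(W^2)^2))/2
      = ∑ i, ∑ j, (b j * ((2*b i*A i j*W^2 - (b i)^2*(2*W*b j))/(W^2)^2))/2 := by
    rw [Finset.sum_div]
    exact Finset.sum_congr rfl fun i _ => by rw [Finset.sum_div]
  rw [half, double_sum_sub, double_sum_sub, double_sum_add, double_sum_add]
  refine Finset.sum_congr rfl fun i _ => Finset.sum_congr rfl fun j _ => ?_
  by_cases h : i = j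
  · subst h
    simp only [if_pos rfl, if_true]
    field_simp
    ring
  · simp only [if_neg h]
    field_simp
    ring


/-! ### the core integral identity -/

lemma integral_lap_eq_zero {m : ℕ} {w : (Fin (m+1) → ℝ) → ℝ}
    (hw : ContDiff ℝ (⊤:ℕ∞) w) (hper : Per w) :
    ∫ x in Set.Icc (0 : Fin (m+1) → ℝ) 1, lap w x = 0 := by
  have h1 : lap w = fun x => ∑ i, pd i (pd i w) x := rfl
  rw [h1, MeasureTheory.integral_finset_sum (f := fun i => fun x => pd i (pd i w) x)
    Finset.univ (fun i _ => integrableOn_cube (contDiff_pd2 hw i i).continuous)]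
  refine Finset.sum_eq_zero fun i _ => ?_
  exact integral_pd_eq_zero (contDiff_pd hw i) (per_pd hw hper i) i

lemma core_integral {m : ℕ} {w : (Fin (m+1) → ℝ) → ℝ}
    (hw : ContDiff ℝ (⊤:ℕ∞) w) (hper : Per w) (hpos : ∀ x, 0 < w x)
    {t : ℝ} (ht : 0 < t) :
    ∫ x in Set.Icc (0 : Fin (m+1) → ℝ) 1,
      (2*t*(gradSq w x / w x)
        + t^2*(2*((∑ i, ∑ j, pd i w x * pd i (pd j (pd j w)) x) / w x)
          - gradSq w x * lap w x/(w x)^2)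
        - 2*((m:ℝ)+1)*w x - 2*((m:ℝ)+1)*t*lap w x)
    = -2*t^2 * ∫ x in Set.Icc (0 : Fin (m+1) → ℝ) 1,
        ((∑ i, ∑ j, (-(pd i (pd j w) x)/w x + pd i w x * pd j w x/(w x)^2
            - (1/t)*(if i = j then (1:ℝ) else 0))^2)
          + (gradSq w x/(w x)^2)/t) * w x := by
  have hne : ∀ x, w x ≠ 0 := fun x => (hpos x).ne'
  have hne2 : ∀ x, (w x)^2 ≠ 0 := fun x => pow_ne_zero 2 (hne x)
  have hcw := hw.continuous
  have hc1 : ∀ i : Fin (m+1), Continuous (pd i w) :=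
    fun i => (contDiff_pd hw i).continuous
  have hc2 : ∀ i j : Fin (m+1), Continuous (pd i (pd j w)) :=
    fun i j => (contDiff_pd2 hw i j).continuous
  have hc3 : ∀ i j k : Fin (m+1), Continuous (pd i (pd j (pd k w))) :=
    fun i j k => (contDiff_pd (contDiff_pd2 hw j k) i).continuous
  have hcS : Continuous (gradSq w) := (contDiff_gradSq hw).continuous
  have hcL : Continuous (lap w) := (contDiff_lap hw).continuous
  have cSw : Continuous (fun x => gradSq w x / w x) := hcS.div hcw hne
  have cX : Continuous (fun x => (∑ i, ∑ j, pd i w x * pd i (pd j (pd j w)) x) / w x) :=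
    (continuous_finset_sum _ fun i _ => continuous_finset_sum _ fun j _ =>
      (hc1 i).mul (hc3 i j j)).div hcw hne
  have cSL : Continuous (fun x => gradSq w x * lap w x / (w x)^2) :=
    (hcS.mul hcL).div (hcw.pow 2) hne2
  have cBig : Continuous (Big w) :=
    continuous_finset_sum _ fun i _ => continuous_finset_sum _ fun j _ =>
      (hc2 i j).mul ((((hc2 i j).mul hcw).sub ((hc1 i).mul (hc1 j))).div
        (hcw.pow 2) hne2)
  have cBig2 : Continuous (Big2 w) :=
    continuous_finset_sum _ fun j _ => (hc1 j).mul
      ((((continuous_finset_sum _ fun i _ => (continuous_const.mul (hc1 i)).mul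
        (hc2 i j)).mul (hcw.pow 2)).sub
        (hcS.mul ((continuous_const.mul hcw).mul (hc1 j)))).div
        ((hcw.pow 2).pow 2) (fun x => pow_ne_zero 2 (hne2 x)))
  -- split the LHS
  have split : (fun x => 2*t*(gradSq w x / w x)
        + t^2*(2*((∑ i, ∑ j, pd i w x * pd i (pd j (pd j w)) x) / w x)
          - gradSq w x * lap w x/(w x)^2)
        - 2*((m:ℝ)+1)*w x - 2*((m:ℝ)+1)*t*lap w x)
      = fun x => (2*t)*(gradSq w x / w x)
          + (2*t^2)*((∑ i, ∑ j, pd i w x * pd i (pd j (pd j w)) x) / w x)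
          - t^2*(gradSq w x * lap w x/(w x)^2)
          - (2*((m:ℝ)+1))*w x - (2*((m:ℝ)+1)*t)*lap w x := by
    funext x; ring
  rw [split]
  rw [MeasureTheory.integral_sub (((((continuous_const.fun_mul cSw).fun_add
      (continuous_const.fun_mul cX)).fun_sub (continuous_const.fun_mul cSL)).fun_sub
      (continuous_const.fun_mul hcw)).integrableOn_cube') ((continuous_const.fun_mul hcL).integrableOn_cube'),
    MeasureTheory.integral_sub ((((continuous_const.fun_mul cSw).fun_add
      (continuous_const.fun_mul cX)).fun_sub (continuous_const.fun_mul cSL)).integrableOn_cube')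
      ((continuous_const.fun_mul hcw).integrableOn_cube'),
    MeasureTheory.integral_sub (((continuous_const.fun_mul cSw).fun_add
      (continuous_const.fun_mul cX)).integrableOn_cube') ((continuous_const.fun_mul cSL).integrableOn_cube'),
    MeasureTheory.integral_add ((continuous_const.fun_mul cSw).integrableOn_cube')
      ((continuous_const.fun_mul cX).integrableOn_cube')]
  rw [MeasureTheory.integral_const_mul, MeasureTheory.integral_const_mul,
    MeasureTheory.integral_const_mul, MeasureTheory.integral_const_mul,
    MeasureTheory.integral_const_mul]
  rw [ibp1 hw hper hpos, ibp2 hw hper hpos, integral_lap_eq_zero hw hper]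
  -- rewrite the RHS integrand via the pointwise identity
  have hRT : ∫ x in Set.Icc (0 : Fin (m+1) → ℝ) 1,
        ((∑ i, ∑ j, (-(pd i (pd j w) x)/w x + pd i w x * pd j w x/(w x)^2
            - (1/t)*(if i = j then (1:ℝ) else 0))^2)
          + (gradSq w x/(w x)^2)/t) * w x
      = ∫ x in Set.Icc (0 : Fin (m+1) → ℝ) 1,
          (Big w x - (Big2 w x)/2 - (1/t)*(gradSq w x / w x)
            + (2/t)*lap w x + (((m:ℝ)+1)/t^2)*w x) := by
    refine MeasureTheory.setIntegral_congr_fun measurableSet_Icc fun x _ => ?_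
    have key := PW_abstract (fun i j => pd i (pd j w) x) (fun i => pd i w x)
      (hne x) ht.ne'
    have hg : gradSq w x = ∑ i, (pd i w x)^2 := rfl
    have hl : lap w x = ∑ i, pd i (pd i w) x := rfl
    have hb : Big w x = ∑ i, ∑ j, pd i (pd j w) x *
        ((pd i (pd j w) x * w x - pd i w x * pd j w x) / (w x) ^ 2) := rfl
    have hb2 : Big2 w x = ∑ j, pd j w x *
        (((∑ i, 2 * pd i w x * pd i (pd j w) x) * (w x) ^ 2
          - gradSq w x * (2 * w x * pd j w x)) / ((w x) ^ 2) ^ 2) := rfl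
    rw [hg, hl, hb, hb2]
    push_cast at key ⊢
    convert key using 2
    rfl
  rw [hRT]
  rw [MeasureTheory.integral_add ((((cBig.fun_sub (cBig2.div_const 2)).fun_sub
      (continuous_const.fun_mul cSw)).fun_add (continuous_const.fun_mul hcL)).integrableOn_cube')
      ((continuous_const.fun_mul hcw).integrableOn_cube'),
    MeasureTheory.integral_add (((cBig.fun_sub (cBig2.div_const 2)).fun_sub
      (continuous_const.fun_mul cSw)).integrableOn_cube') ((continuous_const.fun_mul hcL).integrableOn_cube'),
    MeasureTheory.integral_sub ((cBig.fun_sub (cBig2.div_const 2)).integrableOn_cube')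
      ((continuous_const.fun_mul cSw).integrableOn_cube'),
    MeasureTheory.integral_sub (cBig.integrableOn_cube')
      ((cBig2.div_const 2).integrableOn_cube')]
  rw [MeasureTheory.integral_const_mul, MeasureTheory.integral_const_mul,
    MeasureTheory.integral_const_mul, MeasureTheory.integral_div,
    integral_lap_eq_zero hw hper]
  field_simp
  ring


end EntropyAux

open EntropyAux

/-- Derivative formula for the entropy `F`:
`dF/dt = −2t² ∫ (|∇²u − (1/t)I|² + |∇u|²/t) e^{−u} ≤ 0`. -/
theorem entropy_F_deriv
    (n : ℕ) (hn : 1 ≤ n) (f : ℝ → (Fin n → ℝ) → ℝ)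
    (hsmooth : ContDiffOn ℝ (⊤ : ℕ∞) (fun p : ℝ × (Fin n → ℝ) => f p.1 p.2)
      (Set.Ioi 0 ×ˢ Set.univ))
    (hpos : ∀ t > (0:ℝ), ∀ x : Fin n → ℝ, 0 < f t x)
    (hheat : ∀ t > (0:ℝ), ∀ x : Fin n → ℝ, deriv (fun s => f s x) t = lap (f t) x)
    (hper : ∀ t > (0:ℝ), ∀ x : Fin n → ℝ, ∀ m : Fin n → ℤ,
      f t (x + fun i => (m i : ℝ)) = f t x)
    (u : ℝ → (Fin n → ℝ) → ℝ) (hu : ∀ t x, u t x = -Real.log (f t x))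
    (F : ℝ → ℝ)
    (hF : ∀ t, F t = ∫ x in Set.Icc (0 : Fin n → ℝ) 1,
      (t ^ 2 * gradSq (u t) x - 2 * n * t) * Real.exp (-(u t x))) :
    ∀ t > (0:ℝ),
      HasDerivAt F
        (-2 * t ^ 2 * ∫ x in Set.Icc (0 : Fin n → ℝ) 1,
          ((∑ i, ∑ j, (hess i j (u t) x - (1 / t) * (if i = j then (1:ℝ) else 0)) ^ 2)
            + gradSq (u t) x / t) * Real.exp (-(u t x))) t ∧
      (-2 * t ^ 2 * ∫ x in Set.Icc (0 : Fin n → ℝ) 1,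
          ((∑ i, ∑ j, (hess i j (u t) x - (1 / t) * (if i = j then (1:ℝ) else 0)) ^ 2)
            + gradSq (u t) x / t) * Real.exp (-(u t x))) ≤ 0 := by
  intro t ht
  -- Part 2 : nonpositivity (easy)
  have hnonpos : (-2 * t ^ 2 * ∫ x in Set.Icc (0 : Fin n → ℝ) 1,
      ((∑ i, ∑ j, (hess i j (u t) x - (1 / t) * (if i = j then (1:ℝ) else 0)) ^ 2)
        + gradSq (u t) x / t) * Real.exp (-(u t x))) ≤ 0 := by
    have hint : 0 ≤ ∫ x in Set.Icc (0 : Fin n → ℝ) 1,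
        ((∑ i, ∑ j, (hess i j (u t) x - (1 / t) * (if i = j then (1:ℝ) else 0)) ^ 2)
          + gradSq (u t) x / t) * Real.exp (-(u t x)) := by
      refine MeasureTheory.setIntegral_nonneg measurableSet_Icc fun x _ => ?_
      refine mul_nonneg (add_nonneg ?_ ?_) (Real.exp_pos _).le
      · exact Finset.sum_nonneg fun i _ => Finset.sum_nonneg fun j _ => sq_nonneg _
      · exact div_nonneg (Finset.sum_nonneg fun i _ => sq_nonneg _) ht.le
    nlinarith
  refine ⟨?_, hnonpos⟩
  -- Part 1 : the derivative
  obtain ⟨m, rfl⟩ : ∃ m, n = m + 1 := ⟨n - 1, by omega⟩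
  set G : ℝ × (Fin (m+1) → ℝ) → ℝ := fun p => f p.1 p.2 with hGdef
  have hG : JSm G := hsmooth
  have hGpos : ∀ p ∈ U (m+1), 0 < G p := fun p hp => hpos p.1 hp.1 p.2
  have hGne : ∀ p ∈ U (m+1), G p ≠ 0 := fun p hp => (hGpos p hp).ne'
  -- the joint integrand
  set H : ℝ × (Fin (m+1) → ℝ) → ℝ :=
    fun p => p.1^2 * (∑ i, (Px i G p)^2) / G p - 2*((m:ℝ)+1)*p.1*G p with hHdef
  have hH : JSm H := by
    refine ContDiffOn.sub (ContDiffOn.div ?_ hG hGne) ?_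
    · exact (contDiff_fst.contDiffOn.pow 2).mul
        (ContDiffOn.sum fun i _ => (hG.px i).pow 2)
    · exact (contDiffOn_const.mul contDiff_fst.contDiffOn).mul hG
  -- slice facts
  have hfs : ∀ s : ℝ, 0 < s → ContDiff ℝ (⊤:ℕ∞) (f s) := fun s hs => hG.slice hs
  have hfne : ∀ s : ℝ, 0 < s → ∀ x, f s x ≠ 0 := fun s hs x => (hpos s hs x).ne'
  have hpx : ∀ s : ℝ, 0 < s → ∀ (i : Fin (m+1)) x, pd i (f s) x = Px i G (s, x) :=
    fun s hs i x => pd_slice hG hs i x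
  have hpdu : ∀ s : ℝ, 0 < s → ∀ (i : Fin (m+1)) x,
      pd i (u s) x = -(pd i (f s) x / f s x) := by
    intro s hs i x
    have h1 : u s = fun y => -Real.log (f s y) := funext fun y => hu s y
    rw [pd_congr i h1 x]
    have h2 : (fun y => -Real.log (f s y)) = fun y => -(fun z => Real.log (f s z)) y := rfl
    rw [h2, pd_neg, pd_log (diffAt (hfs s hs) x) (hfne s hs x)]
  have hgradSqu : ∀ s : ℝ, 0 < s → ∀ x,
      gradSq (u s) x = gradSq (f s) x / (f s x)^2 := by
    intro s hs x
    have h1 : gradSq (u s) x = ∑ i, (pd i (u s) x)^2 := rfl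
    have h2 : gradSq (f s) x = ∑ i, (pd i (f s) x)^2 := rfl
    rw [h1, h2, Finset.sum_div]
    refine Finset.sum_congr rfl fun i _ => ?_
    rw [hpdu s hs i x]
    field_simp
  have hexpu : ∀ s : ℝ, 0 < s → ∀ x, Real.exp (-(u s x)) = f s x := by
    intro s hs x
    rw [hu s x, neg_neg, Real.exp_log (hpos s hs x)]
  -- F agrees with the H-integral near t
  have hFeq : ∀ s : ℝ, 0 < s →
      F s = ∫ x in Set.Icc (0 : Fin (m+1) → ℝ) 1, H (s, x) := by
    intro s hs
    rw [hF s]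
    refine MeasureTheory.setIntegral_congr_fun measurableSet_Icc fun x _ => ?_
    have h1 : H (s, x) = s^2 * (∑ i, (pd i (f s) x)^2) / f s x
        - 2*((m:ℝ)+1)*s*f s x := by
      simp only [hHdef]
      rw [show (∑ i, (Px i G (s, x))^2) = ∑ i, (pd i (f s) x)^2 from
        Finset.sum_congr rfl fun i _ => by rw [hpx s hs i x]]
    rw [h1, hgradSqu s hs x, hexpu s hs x]
    have h2 : gradSq (f s) x = ∑ i, (pd i (f s) x)^2 := rfl
    rw [h2]
    have hne := hfne s hs x
    push_cast
    field_simp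
  have hFev : F =ᶠ[nhds t] fun s => ∫ x in Set.Icc (0 : Fin (m+1) → ℝ) 1, H (s, x) := by
    filter_upwards [isOpen_Ioi.mem_nhds ht] with s hs
    exact hFeq s hs
  -- differentiate under the integral
  have hDer := hasDerivAt_integral_cube hH ht
  -- identify the derivative integrand pointwise
  set w : (Fin (m+1) → ℝ) → ℝ := f t with hwdef
  have hw : ContDiff ℝ (⊤:ℕ∞) w := hfs t ht
  have hwper : Per w := fun x mm => hper t ht x mm
  have hwpos : ∀ x, 0 < w x := hpos t ht
  have hwne : ∀ x, w x ≠ 0 := fun x => (hwpos x).ne'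
  have hPtG : ∀ y, Pt G (t, y) = lap w y := by
    intro y
    have h1 := (hasDerivAt_slice hG ht y).deriv
    have h2 := hheat t ht y
    rw [← h1]
    exact h2.symm ▸ rfl
  have hPtG' : (fun y => Pt G (t, y)) = lap w := funext hPtG
  have hPtPx : ∀ (i : Fin (m+1)) x, Pt (Px i G) (t, x) = pd i (lap w) x := by
    intro i x
    rw [show Pt (Px i G) (t,x) = PD (1,0) (PD (0, Pi.single i 1) G) (t,x) from rfl,
      pD_comm hG _ _ (mem_U ht)]
    have h3 : PD (0, Pi.single i 1) (PD (1,0) G) (t,x) = Px i (Pt G) (t,x) := rfl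
    rw [h3, ← pd_slice hG.pt ht i x, pd_congr i hPtG' x]
  have hPtH : ∀ x, Pt H (t, x)
      = 2*t*(gradSq w x / w x)
        + t^2*(2*((∑ i, ∑ j, pd i w x * pd i (pd j (pd j w)) x) / w x)
          - gradSq w x * lap w x/(w x)^2)
        - 2*((m:ℝ)+1)*w x - 2*((m:ℝ)+1)*t*lap w x := by
    intro x
    -- compute the derivative of s ↦ H (s,x) by hand
    have hB : HasDerivAt (fun s => G (s, x)) (lap w x) t := by
      have := hasDerivAt_slice hG ht x
      rwa [hPtG x] at this
    have hA : ∀ i : Fin (m+1), HasDerivAt (fun s => Px i G (s, x))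
        (pd i (lap w) x) t := by
      intro i
      have := hasDerivAt_slice (hG.px i) ht x
      rwa [hPtPx i x] at this
    have hnum : HasDerivAt (fun s => ∑ i, (Px i G (s, x))^2)
        (∑ i, (2:ℕ) * (Px i G (t, x))^1 * pd i (lap w) x) t :=
      HasDerivAt.fun_sum fun i _ => (hA i).fun_pow 2
    have hsq : HasDerivAt (fun s : ℝ => s^2) ((2:ℕ) * t^1) t := hasDerivAt_pow 2 t
    have h1 := (hsq.fun_mul hnum).div hB (by
      show G (t, x) ≠ 0
      exact hGne (t,x) (mem_U ht))
    have h4 : HasDerivAt (fun s : ℝ => 2*((m:ℝ)+1)*s) (2*((m:ℝ)+1)*1) t :=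
      (hasDerivAt_id t).const_mul (2*((m:ℝ)+1))
    have h5 := h4.mul hB
    have h6 := h1.sub h5
    have h7 : HasDerivAt (fun s => H (s, x)) (Pt H (t, x)) t :=
      hasDerivAt_slice hH ht x
    have h8 := h7.unique h6
    rw [h8]
    -- now turn the expression into the stated one
    have e1 : ∀ i : Fin (m+1), Px i G (t, x) = pd i w x := fun i => (hpx t ht i x).symm
    have e2 : G (t, x) = w x := rfl
    have e3 : ∀ i : Fin (m+1), pd i (lap w) x = ∑ j, pd i (pd j (pd j w)) x :=
      fun i => pd_lap hw i x
    have e4 : gradSq w x = ∑ i, (pd i w x)^2 := rfl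
    simp only [e1, e2, e3, e4]
    have e5 : (∑ i, (2:ℕ) * (pd i w x)^1 * ∑ j, pd i (pd j (pd j w)) x)
        = 2 * ∑ i, ∑ j, pd i w x * pd i (pd j (pd j w)) x := by
      rw [Finset.mul_sum]
      refine Finset.sum_congr rfl fun i _ => ?_
      rw [Finset.mul_sum, Finset.mul_sum]
      exact Finset.sum_congr rfl fun j _ => by push_cast; ring
    rw [e5]
    have hWne := hwne x
    push_cast
    field_simp
    ring
  -- final: rewrite the derivative integral via the core identity
  have hIntEq : (∫ x in Set.Icc (0 : Fin (m+1) → ℝ) 1, Pt H (t, x))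
      = -2*t^2 * ∫ x in Set.Icc (0 : Fin (m+1) → ℝ) 1,
        ((∑ i, ∑ j, (-(pd i (pd j w) x)/w x + pd i w x * pd j w x/(w x)^2
            - (1/t)*(if i = j then (1:ℝ) else 0))^2)
          + (gradSq w x/(w x)^2)/t) * w x := by
    rw [MeasureTheory.setIntegral_congr_fun measurableSet_Icc
      (fun x _ => hPtH x)]
    exact core_integral hw hwper hwpos ht
  -- convert the target integrand
  have hhessu : ∀ (i j : Fin (m+1)) x, hess i j (u t) x
      = -(pd i (pd j w) x)/w x + pd i w x * pd j w x/(w x)^2 := by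
    intro i j x
    have h1 : pd j (u t) = fun y => -(pd j w y / w y) :=
      funext fun y => hpdu t ht j y
    have h2 : hess i j (u t) x = pd i (fun y => -(pd j w y / w y)) x := by
      rw [hess, pd_congr i h1 x]
    have h3 : (fun y => -(pd j w y / w y)) = fun y => -(fun z => pd j w z / w z) y := rfl
    rw [h2, h3, pd_neg, pd_div (diffAt (contDiff_pd hw j) x) (diffAt hw x)
      (hwne x) i]
    have hx := hwne x
    field_simp
    ring
  have hTargetEq : (∫ x in Set.Icc (0 : Fin (m+1) → ℝ) 1,
        ((∑ i, ∑ j, (hess i j (u t) x - (1 / t) * (if i = j then (1:ℝ) else 0)) ^ 2)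
          + gradSq (u t) x / t) * Real.exp (-(u t x)))
      = ∫ x in Set.Icc (0 : Fin (m+1) → ℝ) 1,
        ((∑ i, ∑ j, (-(pd i (pd j w) x)/w x + pd i w x * pd j w x/(w x)^2
            - (1/t)*(if i = j then (1:ℝ) else 0))^2)
          + (gradSq w x/(w x)^2)/t) * w x := by
    refine MeasureTheory.setIntegral_congr_fun measurableSet_Icc fun x _ => ?_
    rw [hexpu t ht x, hgradSqu t ht x]
    congr 2
    refine Finset.sum_congr rfl fun i _ => Finset.sum_congr rfl fun j _ => ?_
    rw [hhessu i j x]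
  rw [hTargetEq, ← hIntEq]
  exact (hFev.hasDerivAt_iff).mpr hDer
end
end
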